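/- arXiv:1312.4714 — 4 statements merged into one kernel-verified Lean document; each statement's English description precedes it below -/
import Mathlib

section
/- Let 0 < α < 1, a ∈ ℝ, and let β be a real number with β > −1 and β ≠ α − 1. Then for every x > a, the left Riemann–Liouville fractional derivative of the power function u ↦ (u−a)^β satisfies _aD^α_x (x−a)^β = (Γ(β+1)/Γ(β+1−α)) (x−a)^{β−α}. -/
open MeasureTheory intervalIntegral

/-- The real Beta integral in terms of the Gamma function. -/
lemma realBetaIntegral (p q : ℝ) (hp : 0 < p) (hq : 0 < q) :
    ∫ t in (0:ℝ)..1, t ^ (p - 1) * (1 - t) ^ (q - 1)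
      = Real.Gamma p * Real.Gamma q / Real.Gamma (p + q) := by
  have key := Complex.Gamma_mul_Gamma_eq_betaIntegral (s := (p : ℂ)) (t := (q : ℂ))
    (by simpa using hp) (by simpa using hq)
  have hbeta : Complex.betaIntegral (p : ℂ) (q : ℂ)
      = ((∫ t in (0:ℝ)..1, t ^ (p - 1) * (1 - t) ^ (q - 1) : ℝ) : ℂ) := by
    rw [Complex.betaIntegral, ← intervalIntegral.integral_ofReal]
    refine intervalIntegral.integral_congr fun t ht => ?_
    rw [Set.uIcc_of_le zero_le_one] at ht
    rw [Complex.ofReal_mul, Complex.ofReal_cpow ht.1, Complex.ofReal_cpow (by linarith [ht.2])]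
    push_cast
    ring
  rw [hbeta, ← Complex.ofReal_add, Complex.Gamma_ofReal, Complex.Gamma_ofReal,
    Complex.Gamma_ofReal, ← Complex.ofReal_mul, ← Complex.ofReal_mul] at key
  have key' : Real.Gamma p * Real.Gamma q
      = Real.Gamma (p + q) * ∫ t in (0:ℝ)..1, t ^ (p - 1) * (1 - t) ^ (q - 1) := by
    exact_mod_cast key
  have hG : Real.Gamma (p + q) ≠ 0 := (Real.Gamma_pos_of_pos (by linarith)).ne'
  field_simp [key']
  rw [key']
  ring

/-- The left Riemann–Liouville fractional derivative of order `α ∈ (0,1)`: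
auxiliary computation of the fractional integral of a power function. -/
lemma pow_convolution_integral (a α β x : ℝ) (hx : a < x) (hβ : -1 < β) (hα1 : α < 1) :
    (∫ u in a..x, (u - a) ^ β * (x - u) ^ (-α))
      = (x - a) ^ (β + 1 - α)
          * (Real.Gamma (β + 1) * Real.Gamma (1 - α) / Real.Gamma (β + 2 - α)) := by
  have hxa : (0:ℝ) < x - a := by linarith
  set f : ℝ → ℝ := fun v => (v - a) ^ β * (x - v) ^ (-α) with hf
  have hsub := intervalIntegral.smul_integral_comp_mul_add (a := (0:ℝ)) (b := 1) (f := f)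
    (x - a) a
  simp only [mul_zero, zero_add, mul_one, smul_eq_mul] at hsub
  have h1 : x - a + a = x := by ring
  rw [h1] at hsub
  have hcong : (∫ t in (0:ℝ)..1, f ((x - a) * t + a))
      = ∫ t in (0:ℝ)..1, ((x - a) ^ β * (x - a) ^ (-α))
          * (t ^ ((β + 1) - 1) * (1 - t) ^ ((1 - α) - 1)) := by
    refine intervalIntegral.integral_congr fun t ht => ?_
    rw [Set.uIcc_of_le zero_le_one] at ht
    have ht0 : 0 ≤ t := ht.1
    have ht1 : 0 ≤ 1 - t := by linarith [ht.2]
    have e1 : (x - a) * t + a - a = (x - a) * t := by ring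
    have e2 : x - ((x - a) * t + a) = (x - a) * (1 - t) := by ring
    rw [hf]
    simp only [e1, e2]
    rw [Real.mul_rpow hxa.le ht0, Real.mul_rpow hxa.le ht1]
    norm_num
    ring
  rw [hcong, intervalIntegral.integral_const_mul,
    realBetaIntegral (β + 1) (1 - α) (by linarith) (by linarith)] at hsub
  have h2 : β + 1 + (1 - α) = β + 2 - α := by ring
  rw [h2] at hsub
  have hpow : (x - a) * ((x - a) ^ β * (x - a) ^ (-α)) = (x - a) ^ (β + 1 - α) := by
    rw [show β + 1 - α = β + -α + 1 by ring, Real.rpow_add hxa, Real.rpow_add hxa,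
      Real.rpow_one]
    ring
  have hgoal : (∫ u in a..x, f u)
      = (x - a) ^ (β + 1 - α)
          * (Real.Gamma (β + 1) * Real.Gamma (1 - α) / Real.Gamma (β + 2 - α)) := by
    rw [← hsub, ← mul_assoc, hpow]
  rw [hf] at hgoal
  exact hgoal

/-- The fractional integral `(1/Γ(1-α)) ∫_a^x f(u)(x-u)^(-α) du` whose derivative is the
left Riemann–Liouville fractional derivative of order `α ∈ (0,1)` with base point `a`. -/
noncomputable def leftRLint (a α : ℝ) (f : ℝ → ℝ) (x : ℝ) : ℝ :=
  (1 / Real.Gamma (1 - α)) * ∫ u in a..x, f u * (x - u) ^ (-α)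

/-- The left Riemann–Liouville fractional derivative of order `α ∈ (0,1)`:
`_aD^α_x f(x) = (d/dx)[(1/Γ(1-α)) ∫_a^x f(u)(x-u)^(-α) du]`. -/
noncomputable def leftRLderiv (a α : ℝ) (f : ℝ → ℝ) (x : ℝ) : ℝ :=
  deriv (leftRLint a α f) x

/-- Left Riemann–Liouville fractional derivative of a power function: for `β > -1`,
`β ≠ α - 1` and `x > a`,
`_aD^α_x (x-a)^β = (Γ(β+1)/Γ(β+1-α)) (x-a)^(β-α)`. -/
theorem leftRLderiv_pow (a α β : ℝ) (hα0 : 0 < α) (hα1 : α < 1)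
    (hβ : -1 < β) (hβα : β ≠ α - 1) (x : ℝ) (hx : a < x) :
    leftRLderiv a α (fun u => (u - a) ^ β) x
      = (Real.Gamma (β + 1) / Real.Gamma (β + 1 - α)) * (x - a) ^ (β - α) := by
  set C : ℝ := (1 / Real.Gamma (1 - α))
      * (Real.Gamma (β + 1) * Real.Gamma (1 - α) / Real.Gamma (β + 2 - α)) with hC
  have heq : leftRLint a α (fun u => (u - a) ^ β)
      =ᶠ[nhds x] fun y => C * (y - a) ^ (β + 1 - α) := by
    filter_upwards [Ioi_mem_nhds hx] with y hy
    rw [leftRLint, pow_convolution_integral a α β y hy hβ hα1, hC]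
    ring
  have hxa : (0:ℝ) < x - a := by linarith
  have hderiv : HasDerivAt (fun y : ℝ => C * (y - a) ^ (β + 1 - α))
      (C * ((β + 1 - α) * (x - a) ^ (β + 1 - α - 1))) x := by
    have h1 : HasDerivAt (fun y : ℝ => y - a) 1 x := (hasDerivAt_id x).sub_const a
    have h2 := (Real.hasDerivAt_rpow_const (x := x - a) (p := β + 1 - α)
      (Or.inl hxa.ne')).comp x h1
    simpa using h2.const_mul C
  rw [leftRLderiv, heq.deriv_eq, hderiv.deriv]
  have hne : β + 1 - α ≠ 0 := fun h => hβα (by linarith)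
  have hG1 : Real.Gamma (1 - α) ≠ 0 := (Real.Gamma_pos_of_pos (by linarith)).ne'
  have hGβ : Real.Gamma (β + 1 - α) ≠ 0 := by
    refine Real.Gamma_ne_zero fun m => ?_
    cases m with
    | zero => simpa using hne
    | succ n =>
      intro h
      have : (0:ℝ) ≤ n := n.cast_nonneg
      push_cast at h
      linarith
  have hrec : Real.Gamma (β + 2 - α) = (β + 1 - α) * Real.Gamma (β + 1 - α) := by
    rw [show β + 2 - α = (β + 1 - α) + 1 by ring, Real.Gamma_add_one hne]
  rw [hC, hrec, show β + 1 - α - 1 = β - α by ring]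
  field_simp
end

section
/- Let 0 < α < 1, c ∈ ℝ, d > 0, and let f(x) = (1/d)(x−c) − ((5−α)/(2d²))(x−c)² + ((3−α)/(2d³))(x−c)³. Then f(c) = 0, f(c+d) = 0, the left Riemann–Liouville fractional derivative _cD^α_x f(x) tends to 0 as x → c from the right, and _cD^α_x f evaluated at x = c+d equals 0. -/
open MeasureTheory intervalIntegral

lemma rl_ii (x c β : ℝ) (hβ : -1 < β) :
    IntervalIntegrable (fun u => (x - u) ^ β) volume c x := by
  have h := (intervalIntegral.intervalIntegrable_rpow' (a := x - c) (b := 0) hβ).comp_sub_left x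
  simpa using h

lemma rl_powint (x c β : ℝ) (hβ : -1 < β) :
    (∫ u in c..x, (x - u) ^ β) = (x - c) ^ (β + 1) / (β + 1) := by
  rw [intervalIntegral.integral_comp_sub_left (fun v => v ^ β) x, sub_self,
    integral_rpow (Or.inl hβ), Real.zero_rpow (by linarith), sub_zero]

lemma rl_key (α c d x : ℝ) (hα0 : 0 < α) (hα1 : α < 1) (hd : 0 < d) (hx : c < x) :
    (∫ u in c..x, ((1 / d) * (u - c) - ((5 - α) / (2 * d ^ 2)) * (u - c) ^ 2
        + ((3 - α) / (2 * d ^ 3)) * (u - c) ^ 3) * (x - u) ^ (-α))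
      = ((1 / d) * (1 / (1 - α) - 1 / (2 - α))) * (x - c) ^ (2 - α)
        + (-((5 - α) / (2 * d ^ 2)) * (1 / (1 - α) - 2 / (2 - α) + 1 / (3 - α))) * (x - c) ^ (3 - α)
        + (((3 - α) / (2 * d ^ 3)) * (1 / (1 - α) - 3 / (2 - α) + 3 / (3 - α) - 1 / (4 - α)))
            * (x - c) ^ (4 - α) := by
  have ht : (0:ℝ) < x - c := by linarith
  have n0 : -α ≠ 0 := by intro h; simp at h; linarith
  have n1 : (1:ℝ) - α ≠ 0 := by intro h; linarith [sub_eq_zero.mp h]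
  have n2 : (2:ℝ) - α ≠ 0 := by intro h; linarith [sub_eq_zero.mp h]
  have n3 : (3:ℝ) - α ≠ 0 := by intro h; linarith [sub_eq_zero.mp h]
  have n4 : (4:ℝ) - α ≠ 0 := by intro h; linarith [sub_eq_zero.mp h]
  set C0 : ℝ := (1 / d) * (x - c) - ((5 - α) / (2 * d ^ 2)) * (x - c) ^ 2
      + ((3 - α) / (2 * d ^ 3)) * (x - c) ^ 3 with hC0
  set C1 : ℝ := -((1 / d) - ((5 - α) / (2 * d ^ 2)) * (2 * (x - c))
      + ((3 - α) / (2 * d ^ 3)) * (3 * (x - c) ^ 2)) with hC1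
  set C2 : ℝ := -((5 - α) / (2 * d ^ 2)) + ((3 - α) / (2 * d ^ 3)) * (3 * (x - c)) with hC2
  set C3 : ℝ := -((3 - α) / (2 * d ^ 3)) with hC3
  have step1 : Set.EqOn
      (fun u => ((1 / d) * (u - c) - ((5 - α) / (2 * d ^ 2)) * (u - c) ^ 2
        + ((3 - α) / (2 * d ^ 3)) * (u - c) ^ 3) * (x - u) ^ (-α))
      (fun u => C0 * (x - u) ^ (-α) + C1 * (x - u) ^ (1 - α) + C2 * (x - u) ^ (2 - α)
        + C3 * (x - u) ^ (3 - α)) (Set.uIcc c x) := by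
    intro u hu
    rw [Set.uIcc_of_le hx.le] at hu
    rcases eq_or_lt_of_le hu.2 with h | h
    · subst h
      simp only [sub_self, Real.zero_rpow n0, Real.zero_rpow n1, Real.zero_rpow n2,
        Real.zero_rpow n3]
      ring
    · have hv : (0:ℝ) < x - u := by linarith
      have k1 : (x - u) ^ ((1:ℝ) - α) = (x - u) * (x - u) ^ (-α) := by
        rw [show (1:ℝ) - α = 1 + -α by ring, Real.rpow_add hv, Real.rpow_one]
      have k2 : (x - u) ^ ((2:ℝ) - α) = (x - u) ^ 2 * (x - u) ^ (-α) := by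
        rw [show (2:ℝ) - α = ((2:ℕ):ℝ) + -α by push_cast; ring, Real.rpow_add hv,
          Real.rpow_natCast]
      have k3 : (x - u) ^ ((3:ℝ) - α) = (x - u) ^ 3 * (x - u) ^ (-α) := by
        rw [show (3:ℝ) - α = ((3:ℕ):ℝ) + -α by push_cast; ring, Real.rpow_add hv,
          Real.rpow_natCast]
      simp only [k1, k2, k3, hC0, hC1, hC2, hC3]
      ring
  rw [intervalIntegral.integral_congr step1]
  have i0 : IntervalIntegrable (fun u => C0 * (x - u) ^ (-α)) volume c x :=
    (rl_ii x c (-α) (by linarith)).const_mul C0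
  have i1 : IntervalIntegrable (fun u => C1 * (x - u) ^ ((1:ℝ) - α)) volume c x :=
    (rl_ii x c (1 - α) (by linarith)).const_mul C1
  have i2 : IntervalIntegrable (fun u => C2 * (x - u) ^ ((2:ℝ) - α)) volume c x :=
    (rl_ii x c (2 - α) (by linarith)).const_mul C2
  have i3 : IntervalIntegrable (fun u => C3 * (x - u) ^ ((3:ℝ) - α)) volume c x :=
    (rl_ii x c (3 - α) (by linarith)).const_mul C3
  rw [intervalIntegral.integral_add ((i0.add i1).add i2) i3,
    intervalIntegral.integral_add (i0.add i1) i2, intervalIntegral.integral_add i0 i1,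
    intervalIntegral.integral_const_mul, intervalIntegral.integral_const_mul,
    intervalIntegral.integral_const_mul, intervalIntegral.integral_const_mul,
    rl_powint x c (-α) (by linarith), rl_powint x c (1 - α) (by linarith),
    rl_powint x c (2 - α) (by linarith), rl_powint x c (3 - α) (by linarith)]
  have hpow : ∀ n : ℕ, (x - c) ^ ((n:ℝ) - α) = (x - c) ^ n * (x - c) ^ (-α) := by
    intro n
    rw [show (n:ℝ) - α = (n:ℝ) + -α by ring, Real.rpow_add ht, Real.rpow_natCast]
  rw [show -α + 1 = ((1:ℕ):ℝ) - α by push_cast; ring,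
    show (1:ℝ) - α + 1 = ((2:ℕ):ℝ) - α by push_cast; ring,
    show (2:ℝ) - α + 1 = ((3:ℕ):ℝ) - α by push_cast; ring,
    show (3:ℝ) - α + 1 = ((4:ℕ):ℝ) - α by push_cast; ring,
    show (2:ℝ) - α = ((2:ℕ):ℝ) - α by push_cast; ring,
    show (3:ℝ) - α = ((3:ℕ):ℝ) - α by push_cast; ring,
    show (4:ℝ) - α = ((4:ℕ):ℝ) - α by push_cast; ring,
    hpow 1, hpow 2, hpow 3, hpow 4]
  have m1 : ((1:ℕ):ℝ) - α ≠ 0 := by push_cast; exact n1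
  have m2 : ((2:ℕ):ℝ) - α ≠ 0 := by push_cast; exact n2
  have m3 : ((3:ℕ):ℝ) - α ≠ 0 := by push_cast; exact n3
  have m4 : ((4:ℕ):ℝ) - α ≠ 0 := by push_cast; exact n4
  simp only [hC0, hC1, hC2, hC3]
  field_simp
  ring

/-- For `f(x) = (1/d)(x-c) - ((5-α)/(2d²))(x-c)² + ((3-α)/(2d³))(x-c)³` one has
`f(c) = 0`, `f(c+d) = 0`, `_cD^α_x f(x) → 0` as `x → c⁺`, and `_cD^α_{c+d} f = 0`. -/
theorem cubic_boundary_values (α c d : ℝ) (hα0 : 0 < α) (hα1 : α < 1) (hd : 0 < d)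
    (f : ℝ → ℝ)
    (hf : f = fun x => (1 / d) * (x - c) - ((5 - α) / (2 * d ^ 2)) * (x - c) ^ 2
        + ((3 - α) / (2 * d ^ 3)) * (x - c) ^ 3) :
    f c = 0 ∧ f (c + d) = 0 ∧
      Filter.Tendsto (leftRLderiv c α f) (nhdsWithin c (Set.Ioi c)) (nhds 0) ∧
      leftRLderiv c α f (c + d) = 0 := by
  subst hf
  have hd' : d ≠ 0 := ne_of_gt hd
  have n1 : (1:ℝ) - α ≠ 0 := by intro h; linarith [sub_eq_zero.mp h]
  have n2 : (2:ℝ) - α ≠ 0 := by intro h; linarith [sub_eq_zero.mp h]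
  have n3 : (3:ℝ) - α ≠ 0 := by intro h; linarith [sub_eq_zero.mp h]
  have n4 : (4:ℝ) - α ≠ 0 := by intro h; linarith [sub_eq_zero.mp h]
  set K : ℝ := 1 / Real.Gamma (1 - α) with hK
  set B1 : ℝ := (1 / d) * (1 / (1 - α) - 1 / (2 - α)) with hB1
  set B2 : ℝ := -((5 - α) / (2 * d ^ 2)) * (1 / (1 - α) - 2 / (2 - α) + 1 / (3 - α)) with hB2
  set B3 : ℝ := ((3 - α) / (2 * d ^ 3)) * (1 / (1 - α) - 3 / (2 - α) + 3 / (3 - α) - 1 / (4 - α))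
    with hB3
  set g : ℝ → ℝ := fun x => K * (B1 * (x - c) ^ (2 - α) + B2 * (x - c) ^ (3 - α)
    + B3 * (x - c) ^ (4 - α)) with hg
  set F : ℝ → ℝ := fun x => K * (B1 * ((2 - α) * (x - c) ^ (2 - α - 1))
    + B2 * ((3 - α) * (x - c) ^ (3 - α - 1)) + B3 * ((4 - α) * (x - c) ^ (4 - α - 1))) with hF
  have hIg : Set.EqOn (leftRLint c α (fun x => (1 / d) * (x - c)
      - ((5 - α) / (2 * d ^ 2)) * (x - c) ^ 2 + ((3 - α) / (2 * d ^ 3)) * (x - c) ^ 3)) g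
      (Set.Ioi c) := by
    intro x hx
    have := rl_key α c d x hα0 hα1 hd hx
    simp only [leftRLint, hg]
    rw [this]
  have hderiv : ∀ x ∈ Set.Ioi c, leftRLderiv c α (fun x => (1 / d) * (x - c)
      - ((5 - α) / (2 * d ^ 2)) * (x - c) ^ 2 + ((3 - α) / (2 * d ^ 3)) * (x - c) ^ 3) x
      = F x := by
    intro x hx
    have hmem : Set.Ioi c ∈ nhds x := isOpen_Ioi.mem_nhds hx
    have heq : (leftRLint c α (fun x => (1 / d) * (x - c)
        - ((5 - α) / (2 * d ^ 2)) * (x - c) ^ 2 + ((3 - α) / (2 * d ^ 3)) * (x - c) ^ 3))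
        =ᶠ[nhds x] g := Filter.eventuallyEq_of_mem hmem hIg
    have hxc : x - c ≠ 0 := ne_of_gt (by simpa using hx)
    have h2 : HasDerivAt (fun y : ℝ => (y - c) ^ ((2:ℝ) - α))
        ((2 - α) * (x - c) ^ (2 - α - 1)) x := by
      simpa [Function.comp_def] using (Real.hasDerivAt_rpow_const (p := 2 - α) (Or.inl hxc)).comp x
        ((hasDerivAt_id x).sub_const c)
    have h3 : HasDerivAt (fun y : ℝ => (y - c) ^ ((3:ℝ) - α))
        ((3 - α) * (x - c) ^ (3 - α - 1)) x := by
      simpa [Function.comp_def] using (Real.hasDerivAt_rpow_const (p := 3 - α) (Or.inl hxc)).comp x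
        ((hasDerivAt_id x).sub_const c)
    have h4 : HasDerivAt (fun y : ℝ => (y - c) ^ ((4:ℝ) - α))
        ((4 - α) * (x - c) ^ (4 - α - 1)) x := by
      simpa [Function.comp_def] using (Real.hasDerivAt_rpow_const (p := 4 - α) (Or.inl hxc)).comp x
        ((hasDerivAt_id x).sub_const c)
    have hG : HasDerivAt g (F x) x := by
      rw [hg, hF]
      exact (((h2.const_mul B1).add (h3.const_mul B2)).add (h4.const_mul B3)).const_mul K
    rw [leftRLderiv, heq.deriv_eq, hG.deriv]
  refine ⟨by simp, by field_simp; ring, ?_, ?_⟩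
  · -- limit
    have h0 : Filter.Tendsto (fun x : ℝ => x - c) (nhdsWithin c (Set.Ioi c)) (nhds 0) := by
      have : Filter.Tendsto (fun x : ℝ => x - c) (nhds c) (nhds (c - c)) :=
        (continuous_id.sub continuous_const).tendsto c
      simpa using this.mono_left nhdsWithin_le_nhds
    have hpow : ∀ p : ℝ, 0 < p →
        Filter.Tendsto (fun x => (x - c) ^ p) (nhdsWithin c (Set.Ioi c)) (nhds 0) := by
      intro p hp
      have hc : ContinuousAt (fun y : ℝ => y ^ p) 0 :=
        Real.continuousAt_rpow_const 0 p (Or.inr hp.le)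
      have := hc.tendsto.comp h0
      simpa [Function.comp, Function.comp_def, Real.zero_rpow (ne_of_gt hp)] using this
    have hFt : Filter.Tendsto F (nhdsWithin c (Set.Ioi c)) (nhds 0) := by
      have := (((((hpow _ (by linarith : (0:ℝ) < 2 - α - 1)).const_mul (2 - α)).const_mul
        B1).add (((hpow _ (by linarith : (0:ℝ) < 3 - α - 1)).const_mul (3 - α)).const_mul
        B2)).add (((hpow _ (by linarith : (0:ℝ) < 4 - α - 1)).const_mul (4 - α)).const_mul
        B3)).const_mul K
      simpa [hF] using this
    have hEq : (leftRLderiv c α (fun x => (1 / d) * (x - c)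
        - ((5 - α) / (2 * d ^ 2)) * (x - c) ^ 2 + ((3 - α) / (2 * d ^ 3)) * (x - c) ^ 3))
        =ᶠ[nhdsWithin c (Set.Ioi c)] F :=
      Filter.eventuallyEq_of_mem self_mem_nhdsWithin hderiv
    exact hFt.congr' hEq.symm
  · -- value at c + d
    rw [hderiv (c + d) (by simp [hd])]
    simp only [hF]
    rw [show c + d - c = d from by ring]
    have k1 : (2:ℝ) - α - 1 = 1 - α := by ring
    have k2 : d ^ ((3:ℝ) - α - 1) = d * d ^ ((1:ℝ) - α) := by
      rw [show (3:ℝ) - α - 1 = 1 + (1 - α) by ring, Real.rpow_add hd, Real.rpow_one]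
    have k3 : d ^ ((4:ℝ) - α - 1) = d ^ 2 * d ^ ((1:ℝ) - α) := by
      rw [show (4:ℝ) - α - 1 = ((2:ℕ):ℝ) + (1 - α) by push_cast; ring, Real.rpow_add hd,
        Real.rpow_natCast]
    rw [k1, k2, k3, hB1, hB2, hB3]
    have hz : (1 / d) * (1 / (1 - α) - 1 / (2 - α)) * ((2 - α) * d ^ ((1:ℝ) - α))
        + -((5 - α) / (2 * d ^ 2)) * (1 / (1 - α) - 2 / (2 - α) + 1 / (3 - α))
          * ((3 - α) * (d * d ^ ((1:ℝ) - α)))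
        + ((3 - α) / (2 * d ^ 3)) * (1 / (1 - α) - 3 / (2 - α) + 3 / (3 - α) - 1 / (4 - α))
          * ((4 - α) * (d ^ 2 * d ^ ((1:ℝ) - α))) = 0 := by
      field_simp
      ring
    rw [hz, mul_zero]
end

section
/- Let 0 < α < 1, c ∈ ℝ, d > 0, and let f(x) = (1/d)(x−c) − ((5−α)/(2d²))(x−c)² + ((3−α)/(2d³))(x−c)³. Then |f(x)| < 1 for all x ∈ [c, c+d], and |_cD^α_x f(x)| < d^{−α} for all x ∈ (c, c+d]. -/
open MeasureTheory intervalIntegral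


lemma gamma_two_add_ge_one {β : ℝ} (hβ0 : 0 < β) (hβ1 : β < 1) : 1 ≤ Real.Gamma (2 + β) := by
  have hc := Real.convexOn_log_Gamma
  have h1 : Real.Gamma (2 - β) ≤ 1 := by
    have := hc.2 (Set.mem_Ioi.2 one_pos) (Set.mem_Ioi.2 two_pos) (le_of_lt hβ0)
      (by linarith : (0:ℝ) ≤ 1 - β) (by ring)
    simp only [Function.comp, Real.Gamma_one, Real.Gamma_two, Real.log_one, smul_eq_mul,
      mul_zero, add_zero, mul_one] at this
    rw [show β + (1 - β) * 2 = 2 - β by ring] at this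
    have hpos : 0 < Real.Gamma (2 - β) := Real.Gamma_pos_of_pos (by linarith)
    calc Real.Gamma (2 - β) = Real.exp (Real.log (Real.Gamma (2 - β))) := (Real.exp_log hpos).symm
      _ ≤ Real.exp 0 := Real.exp_le_exp.2 this
      _ = 1 := Real.exp_zero
  have h2 : 1 ≤ Real.Gamma (2 - β) * Real.Gamma (2 + β) := by
    have := hc.2 (Set.mem_Ioi.2 (by linarith : (0:ℝ) < 2 - β))
      (Set.mem_Ioi.2 (by linarith : (0:ℝ) < 2 + β))
      (by norm_num : (0:ℝ) ≤ 1/2) (by norm_num : (0:ℝ) ≤ 1/2) (by norm_num)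
    simp only [Function.comp, smul_eq_mul] at this
    rw [show (1:ℝ)/2 * (2 - β) + 1/2 * (2 + β) = 2 by ring] at this
    have hp1 : 0 < Real.Gamma (2 - β) := Real.Gamma_pos_of_pos (by linarith)
    have hp2 : 0 < Real.Gamma (2 + β) := Real.Gamma_pos_of_pos (by linarith)
    have hlog : 0 ≤ Real.log (Real.Gamma (2 - β) * Real.Gamma (2 + β)) := by
      rw [Real.log_mul (ne_of_gt hp1) (ne_of_gt hp2)]
      rw [Real.Gamma_two, Real.log_one] at this; linarith
    have := Real.exp_le_exp.2 hlog
    rwa [Real.exp_zero, Real.exp_log (mul_pos hp1 hp2)] at this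
  have hp2 : 0 < Real.Gamma (2 + β) := Real.Gamma_pos_of_pos (by linarith)
  nlinarith

lemma core_ineq {β s : ℝ} (hβ0 : 0 < β) (hβ1 : β < 1) (hs0 : 0 < s) (hs1 : s ≤ 1) :
    s ^ β * ((1 - s) * |1 + β - 3 * s|) < 1 := by
  have hsp : 0 < s ^ β := Real.rpow_pos_of_pos hs0 β
  have hsle : s ^ β ≤ 1 := Real.rpow_le_one hs0.le hs1 hβ0.le
  rcases le_or_gt (1 + β - 3 * s) 0 with h | h
  · rw [abs_of_nonpos h]
    have h1s : 0 ≤ 1 - s := by linarith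
    have hb : (1 - s) * -(1 + β - 3 * s) ≤ (1 - s) * (3 * s - 1) := by nlinarith
    have hb2 : (1 - s) * (3 * s - 1) ≤ 1/3 := by nlinarith [sq_nonneg (3 * s - 2)]
    nlinarith
  · rw [abs_of_pos h]
    set L := Real.log s with hL
    have hLle : L ≤ s - 1 := Real.log_le_sub_one_of_pos hs0
    have hL0 : L ≤ 0 := Real.log_nonpos hs0.le hs1
    have h1 : s ^ β * (1 - β * L) ≤ 1 := by
      have he : 1 - β * L ≤ Real.exp (-(β * L)) := by
        have := Real.add_one_le_exp (-(β * L)); linarith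
      have hsb : s ^ β = Real.exp (β * L) := by
        rw [Real.rpow_def_of_pos hs0, hL, mul_comm]
      calc s ^ β * (1 - β * L) ≤ s ^ β * Real.exp (-(β * L)) := by
            apply mul_le_mul_of_nonneg_left he hsp.le
        _ = 1 := by rw [hsb, ← Real.exp_add]; simp
    have h2 : (1 - s) * (1 + β - 3 * s) < 1 - β * L := by nlinarith
    have h3 : 0 ≤ (1 - s) * (1 + β - 3 * s) := by nlinarith
    calc s ^ β * ((1 - s) * (1 + β - 3 * s)) < s ^ β * (1 - β * L) := by
          apply mul_lt_mul_of_pos_left h2 hsp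
      _ ≤ 1 := h1


lemma integ_one_sub {γ : ℝ} (hγ : -1 < γ) :
    IntervalIntegrable (fun v : ℝ => (1 - v) ^ γ) volume 0 1 := by
  have h := (intervalIntegral.intervalIntegrable_rpow' (a := 0) (b := 1) hγ).comp_sub_left 1
  simpa using h.symm

lemma integral_one_sub {γ : ℝ} (hγ : -1 < γ) :
    ∫ v in (0:ℝ)..1, (1 - v) ^ γ = 1 / (γ + 1) := by
  rw [intervalIntegral.integral_comp_sub_left (fun w => w ^ γ) 1]
  norm_num
  rw [integral_rpow (Or.inl hγ)]
  rw [Real.zero_rpow (by linarith : γ + 1 ≠ 0), Real.one_rpow]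
  ring

lemma hsplit {α γ : ℝ} (hα1 : α < 1) {w : ℝ} (hw : 0 ≤ w) (n : ℕ)
    (hγ : γ = (n : ℝ) + 1 - α) : w ^ (n + 1) * w ^ (-α) = w ^ γ := by
  have hγ0 : γ ≠ 0 := by
    have : (0:ℝ) ≤ n := Nat.cast_nonneg n
    rw [hγ]; intro h; linarith [h]
  rcases eq_or_lt_of_le hw with h0 | h0
  · rw [← h0, Real.zero_rpow hγ0, zero_pow (Nat.succ_ne_zero n), zero_mul]
  · rw [← Real.rpow_natCast w (n + 1), ← Real.rpow_add h0, hγ]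
    push_cast; ring_nf

lemma moment_integrable {α : ℝ} (hα1 : α < 1) (n : ℕ) :
    IntervalIntegrable (fun v : ℝ => v ^ n * (1 - v) ^ (-α)) volume 0 1 :=
  (integ_one_sub (by linarith)).continuousOn_mul (by fun_prop)

lemma K1val {α : ℝ} (hα0 : 0 < α) (hα1 : α < 1) :
    ∫ v in (0:ℝ)..1, v ^ 1 * (1 - v) ^ (-α) = 1 / (1 - α) - 1 / (2 - α) := by
  have h : Set.EqOn (fun v : ℝ => v ^ 1 * (1 - v) ^ (-α))
      (fun v : ℝ => (1 - v) ^ (-α) - (1 - v) ^ (1 - α)) (Set.uIcc (0:ℝ) 1) := by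
    intro v hv
    rw [Set.uIcc_of_le (by norm_num : (0:ℝ) ≤ 1)] at hv
    have hw : (0:ℝ) ≤ 1 - v := by linarith [hv.2]
    simp only
    rw [← hsplit (γ := 1 - α) hα1 hw 0 (by push_cast; ring)]
    ring
  rw [intervalIntegral.integral_congr h,
    intervalIntegral.integral_sub (integ_one_sub (by linarith)) (integ_one_sub (by linarith)),
    integral_one_sub (γ := -α) (by linarith), integral_one_sub (γ := 1 - α) (by linarith)]
  ring_nf

lemma K2val {α : ℝ} (hα0 : 0 < α) (hα1 : α < 1) :
    ∫ v in (0:ℝ)..1, v ^ 2 * (1 - v) ^ (-α)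
      = 1 / (1 - α) - 2 / (2 - α) + 1 / (3 - α) := by
  have h : Set.EqOn (fun v : ℝ => v ^ 2 * (1 - v) ^ (-α))
      (fun v : ℝ => (1 - v) ^ (-α) - 2 * (1 - v) ^ (1 - α) + (1 - v) ^ (2 - α))
      (Set.uIcc (0:ℝ) 1) := by
    intro v hv
    rw [Set.uIcc_of_le (by norm_num : (0:ℝ) ≤ 1)] at hv
    have hw : (0:ℝ) ≤ 1 - v := by linarith [hv.2]
    simp only
    rw [← hsplit (γ := 1 - α) hα1 hw 0 (by push_cast; ring), ← hsplit (γ := 2 - α) hα1 hw 1 (by push_cast; ring)]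
    ring
  rw [intervalIntegral.integral_congr h,
    intervalIntegral.integral_add
      (((integ_one_sub (by linarith)).sub ((integ_one_sub (by linarith)).const_mul 2)))
      (integ_one_sub (by linarith)),
    intervalIntegral.integral_sub (integ_one_sub (by linarith))
      ((integ_one_sub (by linarith)).const_mul 2),
    intervalIntegral.integral_const_mul,
    integral_one_sub (γ := -α) (by linarith), integral_one_sub (γ := 1 - α) (by linarith),
    integral_one_sub (γ := 2 - α) (by linarith)]
  ring_nf

lemma K3val {α : ℝ} (hα0 : 0 < α) (hα1 : α < 1) :
    ∫ v in (0:ℝ)..1, v ^ 3 * (1 - v) ^ (-α)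
      = 1 / (1 - α) - 3 / (2 - α) + 3 / (3 - α) - 1 / (4 - α) := by
  have h : Set.EqOn (fun v : ℝ => v ^ 3 * (1 - v) ^ (-α))
      (fun v : ℝ => (1 - v) ^ (-α) - 3 * (1 - v) ^ (1 - α) + 3 * (1 - v) ^ (2 - α)
        - (1 - v) ^ (3 - α)) (Set.uIcc (0:ℝ) 1) := by
    intro v hv
    rw [Set.uIcc_of_le (by norm_num : (0:ℝ) ≤ 1)] at hv
    have hw : (0:ℝ) ≤ 1 - v := by linarith [hv.2]
    simp only
    rw [← hsplit (γ := 1 - α) hα1 hw 0 (by push_cast; ring), ← hsplit (γ := 2 - α) hα1 hw 1 (by push_cast; ring),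
      ← hsplit (γ := 3 - α) hα1 hw 2 (by push_cast; ring)]
    ring
  rw [intervalIntegral.integral_congr h,
    intervalIntegral.integral_sub
      (((integ_one_sub (by linarith)).sub ((integ_one_sub (by linarith)).const_mul 3)).add
        ((integ_one_sub (by linarith)).const_mul 3))
      (integ_one_sub (by linarith)),
    intervalIntegral.integral_add
      ((integ_one_sub (by linarith)).sub ((integ_one_sub (by linarith)).const_mul 3))
      ((integ_one_sub (by linarith)).const_mul 3),
    intervalIntegral.integral_sub (integ_one_sub (by linarith))
      ((integ_one_sub (by linarith)).const_mul 3),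
    intervalIntegral.integral_const_mul, intervalIntegral.integral_const_mul,
    integral_one_sub (γ := -α) (by linarith), integral_one_sub (γ := 1 - α) (by linarith),
    integral_one_sub (γ := 2 - α) (by linarith), integral_one_sub (γ := 3 - α) (by linarith)]
  ring_nf

lemma Gval {α c d : ℝ} (hα0 : 0 < α) (hα1 : α < 1) (hd : 0 < d) (f : ℝ → ℝ)
    (hf : f = fun x => (1 / d) * (x - c) - ((5 - α) / (2 * d ^ 2)) * (x - c) ^ 2
        + ((3 - α) / (2 * d ^ 3)) * (x - c) ^ 3)
    {x : ℝ} (hx : c < x) :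
    (∫ u in c..x, f u * (x - u) ^ (-α))
      = (x - c) ^ (1 - α) *
        ((x - c) / d * ∫ v in (0:ℝ)..1, v ^ 1 * (1 - v) ^ (-α))
      - (x - c) ^ (1 - α) *
        ((5 - α) / (2 * d ^ 2) * (x - c) ^ 2 * ∫ v in (0:ℝ)..1, v ^ 2 * (1 - v) ^ (-α))
      + (x - c) ^ (1 - α) *
        ((3 - α) / (2 * d ^ 3) * (x - c) ^ 3 * ∫ v in (0:ℝ)..1, v ^ 3 * (1 - v) ^ (-α)) := by
  set t := x - c with htdef
  have ht : 0 < t := by simp [htdef]; linarith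
  have hxct : x = c + t := by rw [htdef]; ring
  -- Step A: shift
  have hA : (∫ u in c..x, f u * (x - u) ^ (-α))
      = ∫ u in (0:ℝ)..t, f (u + c) * (x - (u + c)) ^ (-α) := by
    rw [intervalIntegral.integral_comp_add_right (fun u => f u * (x - u) ^ (-α)) c]
    rw [zero_add, show t + c = x by rw [hxct]; ring]
  -- Step B: scale
  have hB : (∫ v in (0:ℝ)..1, f (v * t + c) * (x - (v * t + c)) ^ (-α))
      = t⁻¹ * ∫ u in (0:ℝ)..t, f (u + c) * (x - (u + c)) ^ (-α) := by
    have := intervalIntegral.integral_comp_mul_right (a := 0) (b := 1)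
      (fun u => f (u + c) * (x - (u + c)) ^ (-α)) (ne_of_gt ht)
    simpa using this
  -- Step C: integrand transform
  have hC : Set.EqOn (fun v : ℝ => f (v * t + c) * (x - (v * t + c)) ^ (-α))
      (fun v : ℝ => t ^ (-α) * ((t / d) * (v ^ 1 * (1 - v) ^ (-α)))
        - t ^ (-α) * (((5 - α) / (2 * d ^ 2) * t ^ 2) * (v ^ 2 * (1 - v) ^ (-α)))
        + t ^ (-α) * (((3 - α) / (2 * d ^ 3) * t ^ 3) * (v ^ 3 * (1 - v) ^ (-α))))
      (Set.uIcc (0:ℝ) 1) := by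
    intro v hv
    rw [Set.uIcc_of_le (by norm_num : (0:ℝ) ≤ 1)] at hv
    have hw : (0:ℝ) ≤ 1 - v := by linarith [hv.2]
    simp only [hf]
    rw [show x - (v * t + c) = t * (1 - v) by rw [hxct]; ring,
      Real.mul_rpow ht.le hw]
    ring
  have hint1 := (moment_integrable hα1 1).const_mul (t / d)
  have hint2 := (moment_integrable hα1 2).const_mul ((5 - α) / (2 * d ^ 2) * t ^ 2)
  have hint3 := (moment_integrable hα1 3).const_mul ((3 - α) / (2 * d ^ 3) * t ^ 3)
  have hsplit : (∫ v in (0:ℝ)..1, f (v * t + c) * (x - (v * t + c)) ^ (-α))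
      = t ^ (-α) * ((t / d) * ∫ v in (0:ℝ)..1, v ^ 1 * (1 - v) ^ (-α))
      - t ^ (-α) * (((5 - α) / (2 * d ^ 2) * t ^ 2) * ∫ v in (0:ℝ)..1, v ^ 2 * (1 - v) ^ (-α))
      + t ^ (-α) * (((3 - α) / (2 * d ^ 3) * t ^ 3) * ∫ v in (0:ℝ)..1, v ^ 3 * (1 - v) ^ (-α)) := by
    rw [intervalIntegral.integral_congr hC]
    have A := ((moment_integrable hα1 1).const_mul (t / d)).const_mul (t ^ (-α))
    have B := ((moment_integrable hα1 2).const_mul ((5 - α) / (2 * d ^ 2) * t ^ 2)).const_mul (t ^ (-α))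
    have C := ((moment_integrable hα1 3).const_mul ((3 - α) / (2 * d ^ 3) * t ^ 3)).const_mul (t ^ (-α))
    rw [intervalIntegral.integral_add (A.sub B) C, intervalIntegral.integral_sub A B]
    simp only [intervalIntegral.integral_const_mul]
  have htpow : t ^ (1 - α) = t * t ^ (-α) := by
    rw [show (1:ℝ) - α = 1 + (-α) by ring, Real.rpow_add ht, Real.rpow_one]
  rw [hA, ← mul_inv_cancel_left₀ (ne_of_gt ht) (∫ u in (0:ℝ)..t, f (u + c) * (x - (u + c)) ^ (-α)),
    ← hB, hsplit, htpow]
  ring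

set_option maxHeartbeats 1000000 in
theorem part2 (α c d : ℝ) (hα0 : 0 < α) (hα1 : α < 1) (hd : 0 < d)
    (f : ℝ → ℝ)
    (hf : f = fun x => (1 / d) * (x - c) - ((5 - α) / (2 * d ^ 2)) * (x - c) ^ 2
        + ((3 - α) / (2 * d ^ 3)) * (x - c) ^ 3) :
    ∀ x ∈ Set.Ioc c (c + d), |leftRLderiv c α f x| < d ^ (-α) := by
  have hd' : d ≠ 0 := ne_of_gt hd
  rintro x ⟨hx1, hx2⟩
  have hΓpos : 0 < Real.Gamma (1 - α) := Real.Gamma_pos_of_pos (by linarith)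
  have hΓ' : Real.Gamma (1 - α) ≠ 0 := ne_of_gt hΓpos
  have ht : 0 < x - c := by linarith
  have hev : leftRLint c α f =ᶠ[nhds x]
      (fun y => 1 / Real.Gamma (1 - α) * ((y - c) ^ (1 - α) *
        ((y - c) / d * (1 / (1 - α) - 1 / (2 - α))
        - (5 - α) / (2 * d ^ 2) * (y - c) ^ 2 * (1 / (1 - α) - 2 / (2 - α) + 1 / (3 - α))
        + (3 - α) / (2 * d ^ 3) * (y - c) ^ 3
            * (1 / (1 - α) - 3 / (2 - α) + 3 / (3 - α) - 1 / (4 - α))))) := by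
    filter_upwards [isOpen_Ioi.mem_nhds (Set.mem_Ioi.2 hx1)] with y hy
    rw [Set.mem_Ioi] at hy
    rw [leftRLint, Gval hα0 hα1 hd f hf hy, K1val hα0 hα1, K2val hα0 hα1, K3val hα0 hα1]
    ring
  have hyc : HasDerivAt (fun y : ℝ => y - c) 1 x := (hasDerivAt_id x).sub_const c
  have hd1 : HasDerivAt (fun y : ℝ => (y - c) ^ (1 - α)) ((1 - α) * (x - c) ^ (-α)) x := by
    have h := hyc.rpow_const (p := 1 - α) (Or.inl (ne_of_gt ht))
    convert h using 1
    rw [show (1:ℝ) - α - 1 = -α by ring]; ring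
  have hd2 : HasDerivAt (fun y : ℝ => (y - c) / d * (1 / (1 - α) - 1 / (2 - α))
      - (5 - α) / (2 * d ^ 2) * (y - c) ^ 2 * (1 / (1 - α) - 2 / (2 - α) + 1 / (3 - α))
      + (3 - α) / (2 * d ^ 3) * (y - c) ^ 3
          * (1 / (1 - α) - 3 / (2 - α) + 3 / (3 - α) - 1 / (4 - α)))
      ((1 / (1 - α) - 1 / (2 - α)) / d
      - (5 - α) / (2 * d ^ 2) * (2 * (x - c)) * (1 / (1 - α) - 2 / (2 - α) + 1 / (3 - α))
      + (3 - α) / (2 * d ^ 3) * (3 * (x - c) ^ 2)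
          * (1 / (1 - α) - 3 / (2 - α) + 3 / (3 - α) - 1 / (4 - α))) x := by
    have h := (((hyc.div_const d).mul_const (1 / (1 - α) - 1 / (2 - α))).sub
        (((hyc.pow 2).const_mul ((5 - α) / (2 * d ^ 2))).mul_const
          (1 / (1 - α) - 2 / (2 - α) + 1 / (3 - α)))).add
        (((hyc.pow 3).const_mul ((3 - α) / (2 * d ^ 3))).mul_const
          (1 / (1 - α) - 3 / (2 - α) + 3 / (3 - α) - 1 / (4 - α)))
    refine h.congr_deriv ?_
    push_cast; ring
  have hD : leftRLderiv c α f x = 1 / Real.Gamma (1 - α) *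
      (((1 - α) * (x - c) ^ (-α)) * ((x - c) / d * (1 / (1 - α) - 1 / (2 - α))
        - (5 - α) / (2 * d ^ 2) * (x - c) ^ 2 * (1 / (1 - α) - 2 / (2 - α) + 1 / (3 - α))
        + (3 - α) / (2 * d ^ 3) * (x - c) ^ 3
            * (1 / (1 - α) - 3 / (2 - α) + 3 / (3 - α) - 1 / (4 - α)))
      + (x - c) ^ (1 - α) * ((1 / (1 - α) - 1 / (2 - α)) / d
        - (5 - α) / (2 * d ^ 2) * (2 * (x - c)) * (1 / (1 - α) - 2 / (2 - α) + 1 / (3 - α))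
        + (3 - α) / (2 * d ^ 3) * (3 * (x - c) ^ 2)
            * (1 / (1 - α) - 3 / (2 - α) + 3 / (3 - α) - 1 / (4 - α)))) := by
    rw [leftRLderiv, hev.deriv_eq]
    exact ((hd1.mul hd2).const_mul (1 / Real.Gamma (1 - α))).deriv
  -- switch to s = (x - c)/d
  set s : ℝ := (x - c) / d with hsdef
  have hs0 : 0 < s := div_pos ht hd
  have hs1 : s ≤ 1 := by rw [hsdef, div_le_one hd]; linarith
  have htsd : x - c = s * d := by rw [hsdef]; field_simp
  have hts : (x - c) ^ (-α) = s ^ (-α) * d ^ (-α) := by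
    rw [htsd, Real.mul_rpow hs0.le hd.le]
  have ht1 : (x - c) ^ (1 - α) = (x - c) * (x - c) ^ (-α) := by
    rw [show (1:ℝ) - α = 1 + -α by ring, Real.rpow_add ht, Real.rpow_one]
  have hss : s ^ (1 - α) = s * s ^ (-α) := by
    rw [show (1:ℝ) - α = 1 + -α by ring, Real.rpow_add hs0, Real.rpow_one]
  have hne1 : (1:ℝ) - α ≠ 0 := by linarith
  have hne2 : (2:ℝ) - α ≠ 0 := by linarith
  have hne3 : (3:ℝ) - α ≠ 0 := by linarith
  have hne4 : (4:ℝ) - α ≠ 0 := by linarith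
  have key : leftRLderiv c α f x
      = d ^ (-α) * ((s ^ (1 - α) * ((1 - s) * ((2 - α) - 3 * s)))
          / ((1 - α) * ((2 - α) * Real.Gamma (1 - α)))) := by
    rw [hD, ht1, hts, hss, htsd]
    field_simp
    ring
  have hgamma : 1 ≤ (1 - α) * ((2 - α) * Real.Gamma (1 - α)) := by
    have h := gamma_two_add_ge_one (β := 1 - α) (by linarith) (by linarith)
    rw [show (2:ℝ) + (1 - α) = (2 - α) + 1 by ring, Real.Gamma_add_one hne2,
      show (2:ℝ) - α = (1 - α) + 1 by ring, Real.Gamma_add_one hne1] at h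
    calc (1:ℝ) ≤ (1 - α + 1) * ((1 - α) * Real.Gamma (1 - α)) := h
      _ = (1 - α) * ((2 - α) * Real.Gamma (1 - α)) := by ring
  have hGpos : 0 < (1 - α) * ((2 - α) * Real.Gamma (1 - α)) := by linarith
  have hcore : s ^ (1 - α) * ((1 - s) * |(2 - α) - 3 * s|) < 1 := by
    have h := core_ineq (β := 1 - α) (by linarith) (by linarith) hs0 hs1
    rwa [show (1:ℝ) + (1 - α) - 3 * s = (2 - α) - 3 * s by ring] at h
  have hdpow : 0 < d ^ (-α) := Real.rpow_pos_of_pos hd _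
  have hspow : 0 < s ^ (1 - α) := Real.rpow_pos_of_pos hs0 _
  rw [key, abs_mul, abs_div, abs_mul, abs_mul,
    abs_of_pos hdpow, abs_of_pos hspow, abs_of_nonneg (by linarith : (0:ℝ) ≤ 1 - s),
    abs_of_pos hGpos]
  calc d ^ (-α) * (s ^ (1 - α) * ((1 - s) * |(2 - α) - 3 * s|)
          / ((1 - α) * ((2 - α) * Real.Gamma (1 - α))))
      < d ^ (-α) * 1 := by
        apply mul_lt_mul_of_pos_left _ hdpow
        rw [div_lt_one hGpos]
        exact lt_of_lt_of_le hcore hgamma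
    _ = d ^ (-α) := mul_one _


/-- For `f(x) = (1/d)(x-c) - ((5-α)/(2d²))(x-c)² + ((3-α)/(2d³))(x-c)³` one has
`|f(x)| < 1` on `[c, c+d]` and `|_cD^α_x f(x)| < d^(-α)` on `(c, c+d]`. -/
theorem cubic_bounds (α c d : ℝ) (hα0 : 0 < α) (hα1 : α < 1) (hd : 0 < d)
    (f : ℝ → ℝ)
    (hf : f = fun x => (1 / d) * (x - c) - ((5 - α) / (2 * d ^ 2)) * (x - c) ^ 2
        + ((3 - α) / (2 * d ^ 3)) * (x - c) ^ 3) :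
    (∀ x ∈ Set.Icc c (c + d), |f x| < 1) ∧
      (∀ x ∈ Set.Ioc c (c + d), |leftRLderiv c α f x| < d ^ (-α)) := by
  have hd' : d ≠ 0 := ne_of_gt hd
  refine ⟨?_, part2 α c d hα0 hα1 hd f hf⟩
  rintro x ⟨hx1, hx2⟩
  set s : ℝ := (x - c) / d with hsdef
  have hs0 : 0 ≤ s := div_nonneg (by linarith) hd.le
  have hs1 : s ≤ 1 := by rw [hsdef, div_le_one hd]; linarith
  have hxc : x - c = s * d := by rw [hsdef]; field_simp
  have hfx : f x = s * (1 - s) * (1 - (3 - α) / 2 * s) := by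
    rw [hf]; simp only; rw [hxc]; field_simp; ring
  rw [hfx, abs_lt]
  constructor <;>
    nlinarith [mul_nonneg hs0 (by linarith : (0:ℝ) ≤ 1 - s), sq_nonneg (s - 1/2),
      sq_nonneg s, mul_nonneg (mul_nonneg hs0 hs0) (by linarith : (0:ℝ) ≤ 1 - s),
      mul_nonneg (mul_nonneg hs0 (by linarith : (0:ℝ) ≤ 1 - s)) hα0.le,
      mul_nonneg (mul_nonneg (mul_nonneg hs0 hs0) (by linarith : (0:ℝ) ≤ 1 - s)) hα0.le]
end

section
/- Let a < b, let 0 < α < 1, and let P, Q, R : [a,b] → ℝ be continuous. Suppose that for every continuous function η : [a,b] → ℝ with η(a) = η(b) = 0 whose left Riemann–Liouville fractional derivative _aD^α_x η exists and is bounded on (a,b], one has ∫_a^b [ P(x) (_aD^α_x η(x))² + Q(x) η(x) _aD^α_x η(x) + R(x) (η(x))² ] dx ≥ 0. Then P(x) ≥ 0 for all x ∈ [a,b]. -/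
open MeasureTheory intervalIntegral

open Set


noncomputable def tent (c h u : ℝ) : ℝ :=
  max (u - c) 0 - 2 * max (u - (c + h)) 0 + max (u - (c + 2 * h)) 0

noncomputable def gfun (α c h x : ℝ) : ℝ :=
  max (x - c) 0 ^ (1 - α) - 2 * max (x - (c + h)) 0 ^ (1 - α)
    + max (x - (c + 2 * h)) 0 ^ (1 - α)

noncomputable def Gfun (α c h x : ℝ) : ℝ :=
  max (x - c) 0 ^ (2 - α) - 2 * max (x - (c + h)) 0 ^ (2 - α)
    + max (x - (c + 2 * h)) 0 ^ (2 - α)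


lemma ker_intble {α : ℝ} (hα1 : α < 1) (x p q : ℝ) :
    IntervalIntegrable (fun u : ℝ => (x - u) ^ (-α)) volume p q := by
  have h := intervalIntegral.intervalIntegrable_rpow' (a := x - p) (b := x - q)
    (show (-1:ℝ) < -α by linarith)
  simpa using h.comp_sub_left x

lemma cont_rpow {p : ℝ} (hp : 0 ≤ p) : Continuous (fun t : ℝ => t ^ p) :=
  continuous_iff_continuousAt.2 fun t => Real.continuousAt_rpow_const t p (Or.inr hp)

lemma cont_maxpow {p : ℝ} (hp : 0 ≤ p) : Continuous (fun t : ℝ => max t 0 ^ p) :=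
  (cont_rpow hp).comp (continuous_id.max continuous_const)

lemma rpow_subadd {x y p : ℝ} (hx : 0 ≤ x) (hy : 0 ≤ y) (hp : 0 ≤ p) (hp1 : p ≤ 1) :
    (x + y) ^ p ≤ x ^ p + y ^ p := by
  have h := NNReal.rpow_add_le_add_rpow (x.toNNReal) (y.toNNReal) hp hp1
  have hc : ((x.toNNReal + y.toNNReal : NNReal) : ℝ) = x + y := by
    simp [Real.coe_toNNReal, hx, hy]
  calc (x + y) ^ p = (((x.toNNReal + y.toNNReal : NNReal) : ℝ)) ^ p := by rw [hc]
    _ = ((x.toNNReal + y.toNNReal : NNReal) ^ p : NNReal) := by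
        rw [← NNReal.coe_rpow]
    _ ≤ ((x.toNNReal ^ p + y.toNNReal ^ p : NNReal) : ℝ) := by exact_mod_cast h
    _ = x ^ p + y ^ p := by
        push_cast [← NNReal.coe_rpow]
        simp [Real.coe_toNNReal, hx, hy]

lemma ramp_integral {α : ℝ} (hα0 : 0 < α) (hα1 : α < 1) {c x : ℝ} (hcx : c ≤ x) :
    ∫ u in c..x, (u - c) * (x - u) ^ (-α)
      = (x - c) ^ (2 - α) / ((1 - α) * (2 - α)) := by
  have h1α : (0:ℝ) < 1 - α := by linarith
  have h2α : (0:ℝ) < 2 - α := by linarith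
  rcases eq_or_lt_of_le hcx with rfl | hlt
  · simp [Real.zero_rpow (show (2:ℝ) - α ≠ 0 by linarith)]
  · set G : ℝ → ℝ := fun u =>
      -((u - c) * (x - u) ^ (1 - α)) / (1 - α) - (x - u) ^ (2 - α) / ((1 - α) * (2 - α))
      with hG
    have hcont : ContinuousOn G (Icc c x) := by
      apply Continuous.continuousOn
      fun_prop (disch := linarith)
    have hderiv : ∀ u ∈ Ioo c x,
        HasDerivWithinAt G ((u - c) * (x - u) ^ (-α)) (Ioi u) u := by
      intro u hu
      have hxu : 0 < x - u := by simp only [mem_Ioo] at hu; linarith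
      have hne : x - u ≠ 0 := ne_of_gt hxu
      -- derivative of u ↦ (x - u) ^ (1 - α)
      have d1 : HasDerivAt (fun u : ℝ => (x - u) ^ (1 - α))
          ((1 - α) * (x - u) ^ (-α) * (-1)) u := by
        have hb : HasDerivAt (fun u : ℝ => x - u) (-1) u := by
          exact (hasDerivAt_id' u).const_sub x
        have := (Real.hasDerivAt_rpow_const (x := x - u) (p := 1 - α)
          (Or.inl hne)).comp u hb
        rw [show (1 - α - 1) = -α by ring] at this
        exact this
      have d2 : HasDerivAt (fun u : ℝ => (x - u) ^ (2 - α))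
          ((2 - α) * (x - u) ^ (1 - α) * (-1)) u := by
        have hb : HasDerivAt (fun u : ℝ => x - u) (-1) u := by
          exact (hasDerivAt_id' u).const_sub x
        have := (Real.hasDerivAt_rpow_const (x := x - u) (p := 2 - α)
          (Or.inl hne)).comp u hb
        rw [show (2 - α - 1) = 1 - α by ring] at this
        exact this
      have d3 : HasDerivAt (fun u : ℝ => u - c) 1 u := by
        simpa using (hasDerivAt_id u).sub_const c
      have dG : HasDerivAt G
          (-(1 * (x - u) ^ (1 - α) + (u - c) * ((1 - α) * (x - u) ^ (-α) * (-1))) / (1 - α)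
            - ((2 - α) * (x - u) ^ (1 - α) * (-1)) / ((1 - α) * (2 - α))) u := by
        have hm : HasDerivAt (fun u : ℝ => (u - c) * (x - u) ^ (1 - α))
            (1 * (x - u) ^ (1 - α) + (u - c) * ((1 - α) * (x - u) ^ (-α) * (-1))) u :=
          d3.mul d1
        exact ((hm.neg.div_const (1 - α)).sub (d2.div_const ((1 - α) * (2 - α))))
      have key : (-(1 * (x - u) ^ (1 - α) + (u - c) * ((1 - α) * (x - u) ^ (-α) * (-1))) / (1 - α)
            - ((2 - α) * (x - u) ^ (1 - α) * (-1)) / ((1 - α) * (2 - α)))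
          = (u - c) * (x - u) ^ (-α) := by
        have hsplit : (x - u) ^ (1 - α) = (x - u) ^ (-α) * (x - u) := by
          have h := Real.rpow_add hxu (-α) 1
          rw [Real.rpow_one] at h
          rw [show (1 - α) = -α + 1 by ring, h]
        rw [hsplit]
        field_simp
        ring
      rw [← key]
      exact dG.hasDerivWithinAt
    have hint : IntervalIntegrable (fun u => (u - c) * (x - u) ^ (-α)) volume c x :=
      (ker_intble hα1 x c x).continuousOn_mul (by fun_prop)
    rw [intervalIntegral.integral_eq_sub_of_hasDeriv_right_of_le hlt.le hcont hderiv hint]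
    have hz1 : (x - x : ℝ) = 0 := sub_self x
    simp only [hG, hz1, Real.zero_rpow (ne_of_gt h1α), Real.zero_rpow (ne_of_gt h2α),
      mul_zero, zero_div, sub_self, neg_zero, zero_sub, sub_zero]
    field_simp
    ring

lemma ramp_RL {α : ℝ} (hα0 : 0 < α) (hα1 : α < 1) {a c : ℝ} (hac : a ≤ c) (x : ℝ) :
    ∫ u in a..x, max (u - c) 0 * (x - u) ^ (-α)
      = max (x - c) 0 ^ (2 - α) / ((1 - α) * (2 - α)) := by
  have h2α : (0:ℝ) < 2 - α := by linarith
  rcases le_or_gt x c with hxc | hcx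
  · have hz : EqOn (fun u => max (u - c) 0 * (x - u) ^ (-α)) 0 (uIcc a x) := by
      intro u hu
      have : u ≤ c := le_trans (hu.2) (by simp [le_max_iff, hac, hxc])
      simp [max_eq_right (by linarith : u - c ≤ 0)]
    rw [intervalIntegral.integral_congr hz]
    simp [max_eq_right (by linarith : x - c ≤ 0), Real.zero_rpow (ne_of_gt h2α)]
  · have hint1 : IntervalIntegrable (fun u => max (u - c) 0 * (x - u) ^ (-α)) volume a c :=
      (ker_intble hα1 x a c).continuousOn_mul (by fun_prop)
    have hint2 : IntervalIntegrable (fun u => max (u - c) 0 * (x - u) ^ (-α)) volume c x :=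
      (ker_intble hα1 x c x).continuousOn_mul (by fun_prop)
    rw [← intervalIntegral.integral_add_adjacent_intervals hint1 hint2]
    have e1 : EqOn (fun u => max (u - c) 0 * (x - u) ^ (-α)) 0 (uIcc a c) := by
      intro u hu
      have : u ≤ c := le_trans hu.2 (by simp [hac])
      simp [max_eq_right (by linarith : u - c ≤ 0)]
    have e2 : EqOn (fun u => max (u - c) 0 * (x - u) ^ (-α))
        (fun u => (u - c) * (x - u) ^ (-α)) (uIcc c x) := by
      intro u hu
      have : c ≤ u := le_trans (by simp [hcx.le]) hu.1
      simp [max_eq_left (by linarith : 0 ≤ u - c)]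
    rw [intervalIntegral.integral_congr e1, intervalIntegral.integral_congr e2,
      ramp_integral hα0 hα1 hcx.le]
    simp [max_eq_left (by linarith : (0:ℝ) ≤ x - c)]

lemma hasDerivAt_maxpow {p : ℝ} (hp : 0 < p) (t : ℝ) :
    HasDerivAt (fun s : ℝ => max s 0 ^ (p + 1)) ((p + 1) * max t 0 ^ p) t := by
  rcases lt_trichotomy t 0 with ht | rfl | ht
  · have : (fun s : ℝ => max s 0 ^ (p + 1)) =ᶠ[nhds t] fun _ => (0:ℝ) ^ (p + 1) := by
      filter_upwards [Iio_mem_nhds ht] with s hs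
      rw [max_eq_right (le_of_lt hs)]
    rw [show ((p + 1) * max t 0 ^ p) = 0 by
      rw [max_eq_right ht.le, Real.zero_rpow (ne_of_gt hp)]; ring]
    exact (hasDerivAt_const t ((0:ℝ) ^ (p + 1))).congr_of_eventuallyEq this
  · rw [show ((p + 1) * max 0 0 ^ p) = 0 by
      rw [max_self, Real.zero_rpow (ne_of_gt hp)]; ring]
    rw [hasDerivAt_iff_tendsto_slope]
    apply squeeze_zero_norm' (a := fun s => |s| ^ p)
    · filter_upwards [self_mem_nhdsWithin] with s (hs : s ≠ 0)
      rcases lt_or_gt_of_ne hs with h | h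
      · simp only [slope_def_field, max_self, Real.zero_rpow (by positivity : p + 1 ≠ 0)]
        rw [max_eq_right h.le, Real.zero_rpow (by positivity : p + 1 ≠ 0)]
        simp [Real.rpow_nonneg (abs_nonneg s) p]
      · simp only [slope_def_field, max_self, Real.zero_rpow (by positivity : p + 1 ≠ 0)]
        rw [max_eq_left h.le]
        have : s ^ (p + 1) = s ^ p * s := by
          rw [Real.rpow_add h, Real.rpow_one]
        rw [this]
        have : (s ^ p * s - 0) / (s - 0) = s ^ p := by field_simp; ring
        rw [this]
        rw [Real.norm_eq_abs, abs_of_nonneg (Real.rpow_nonneg h.le p), abs_of_nonneg h.le]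
    · have : Filter.Tendsto (fun s : ℝ => |s| ^ p) (nhds 0) (nhds 0) := by
        have hc : ContinuousAt (fun s : ℝ => |s| ^ p) 0 := by
          have h1 : ContinuousAt (fun t : ℝ => t ^ p) (|(0:ℝ)|) := by
            simpa using Real.continuousAt_rpow_const 0 p (Or.inr hp.le)
          exact h1.comp continuous_abs.continuousAt
        simpa [Real.zero_rpow (ne_of_gt hp)] using hc.tendsto
      exact this.mono_left nhdsWithin_le_nhds
  · have : (fun s : ℝ => max s 0 ^ (p + 1)) =ᶠ[nhds t] fun s => s ^ (p + 1) := by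
      filter_upwards [Ioi_mem_nhds ht] with s (hs : 0 < s)
      rw [max_eq_left hs.le]
    have hd : HasDerivAt (fun s : ℝ => s ^ (p + 1)) ((p + 1) * t ^ (p + 1 - 1)) t :=
      Real.hasDerivAt_rpow_const (Or.inl (ne_of_gt ht))
    rw [show (p + 1 - 1) = p by ring] at hd
    rw [max_eq_left ht.le]
    exact hd.congr_of_eventuallyEq this

lemma tent_RLint {α a c h : ℝ} (hα0 : 0 < α) (hα1 : α < 1) (hac : a ≤ c) (hh : 0 ≤ h) :
    leftRLint a α (tent c h)
      = fun x => Gfun α c h x / ((1 - α) * (2 - α) * Real.Gamma (1 - α)) := by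
  funext x
  have hΓ : Real.Gamma (1 - α) ≠ 0 := (Real.Gamma_pos_of_pos (by linarith)).ne'
  have i1 : IntervalIntegrable (fun u => max (u - c) 0 * (x - u) ^ (-α)) volume a x :=
    (ker_intble hα1 x a x).continuousOn_mul (by fun_prop)
  have i2 : IntervalIntegrable (fun u => max (u - (c + h)) 0 * (x - u) ^ (-α)) volume a x :=
    (ker_intble hα1 x a x).continuousOn_mul (by fun_prop)
  have i3 : IntervalIntegrable (fun u => max (u - (c + 2 * h)) 0 * (x - u) ^ (-α)) volume a x :=
    (ker_intble hα1 x a x).continuousOn_mul (by fun_prop)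
  have e : (fun u => tent c h u * (x - u) ^ (-α))
      = fun u => (max (u - c) 0 * (x - u) ^ (-α)
          - 2 * (max (u - (c + h)) 0 * (x - u) ^ (-α)))
          + max (u - (c + 2 * h)) 0 * (x - u) ^ (-α) := by
    funext u; simp only [tent]; ring
  simp only [leftRLint, e]
  rw [intervalIntegral.integral_add (i1.sub (i2.const_mul 2)) i3,
    intervalIntegral.integral_sub i1 (i2.const_mul 2),
    intervalIntegral.integral_const_mul,
    ramp_RL hα0 hα1 hac x, ramp_RL hα0 hα1 (by linarith : a ≤ c + h) x,
    ramp_RL hα0 hα1 (by linarith : a ≤ c + 2 * h) x]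
  simp only [Gfun]
  have h2 : (2:ℝ) - α ≠ 0 := by linarith
  have h1 : (1:ℝ) - α ≠ 0 := by linarith
  field_simp

lemma Gfun_hasDeriv {α c h : ℝ} (hα1 : α < 1) (x : ℝ) :
    HasDerivAt (Gfun α c h) ((2 - α) * gfun α c h x) x := by
  have h1 : (0:ℝ) < 1 - α := by linarith
  have term : ∀ c' : ℝ, HasDerivAt (fun y : ℝ => max (y - c') 0 ^ (2 - α))
      ((2 - α) * max (x - c') 0 ^ (1 - α)) x := by
    intro c'
    have hb : HasDerivAt (fun y : ℝ => y - c') 1 x := by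
      simpa using (hasDerivAt_id x).sub_const c'
    rw [show (2:ℝ) - α = (1 - α) + 1 by ring]
    have := (hasDerivAt_maxpow h1 (x - c')).comp x hb
    simp only [mul_one] at this
    exact this
  have := ((term c).sub ((term (c + h)).const_mul 2)).add (term (c + 2 * h))
  have e : (2 - α) * gfun α c h x = (2 - α) * max (x - c) 0 ^ (1 - α)
      - 2 * ((2 - α) * max (x - (c + h)) 0 ^ (1 - α))
      + (2 - α) * max (x - (c + 2 * h)) 0 ^ (1 - α) := by
    simp only [gfun]; ring
  rw [e]; exact this

lemma tent_RLderiv {α a c h : ℝ} (hα0 : 0 < α) (hα1 : α < 1) (hac : a ≤ c) (hh : 0 ≤ h)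
    (x : ℝ) :
    leftRLderiv a α (tent c h) x = gfun α c h x / ((1 - α) * Real.Gamma (1 - α)) := by
  have hΓ : Real.Gamma (1 - α) ≠ 0 := (Real.Gamma_pos_of_pos (by linarith)).ne'
  have hd : HasDerivAt
      (fun y => Gfun α c h y / ((1 - α) * (2 - α) * Real.Gamma (1 - α)))
      ((2 - α) * gfun α c h x / ((1 - α) * (2 - α) * Real.Gamma (1 - α))) x :=
    (Gfun_hasDeriv hα1 x).div_const _
  rw [leftRLderiv, tent_RLint hα0 hα1 hac hh, hd.deriv]
  have h2 : (2:ℝ) - α ≠ 0 := by linarith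
  have h1 : (1:ℝ) - α ≠ 0 := by linarith
  field_simp

lemma tent_cont (c h : ℝ) : Continuous (tent c h) := by unfold tent; fun_prop

lemma tent_zero_left {c h u : ℝ} (hh : 0 ≤ h) (hu : u ≤ c) : tent c h u = 0 := by
  unfold tent
  rw [max_eq_right (by linarith), max_eq_right (by linarith), max_eq_right (by linarith)]
  ring

lemma tent_zero_right {c h u : ℝ} (hh : 0 ≤ h) (hu : c + 2 * h ≤ u) : tent c h u = 0 := by
  unfold tent
  rw [max_eq_left (by linarith), max_eq_left (by linarith), max_eq_left (by linarith)]
  ring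

lemma tent_bounds {c h : ℝ} (hh : 0 ≤ h) (u : ℝ) : 0 ≤ tent c h u ∧ tent c h u ≤ h := by
  unfold tent
  rcases le_total u c with h1 | h1
  · rw [max_eq_right (by linarith), max_eq_right (by linarith), max_eq_right (by linarith)]
    constructor <;> linarith
  rcases le_total u (c + h) with h2 | h2
  · rw [max_eq_left (by linarith), max_eq_right (by linarith), max_eq_right (by linarith)]
    constructor <;> linarith
  rcases le_total u (c + 2 * h) with h3 | h3
  · rw [max_eq_left (by linarith), max_eq_left (by linarith), max_eq_right (by linarith)]
    constructor <;> linarith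
  · rw [max_eq_left (by linarith), max_eq_left (by linarith), max_eq_left (by linarith)]
    constructor <;> linarith

lemma gfun_cont {α : ℝ} (hα1 : α < 1) (c h : ℝ) : Continuous (gfun α c h) := by
  unfold gfun; fun_prop (disch := linarith)

lemma gfun_zero_left {α c h x : ℝ} (hα1 : α < 1) (hh : 0 ≤ h) (hx : x ≤ c) :
    gfun α c h x = 0 := by
  unfold gfun
  rw [max_eq_right (by linarith), max_eq_right (by linarith), max_eq_right (by linarith),
    Real.zero_rpow (by linarith : (1:ℝ) - α ≠ 0)]
  ring

lemma gfun_mid {α c h x : ℝ} (hα1 : α < 1) (hh : 0 ≤ h) (hx1 : c ≤ x) (hx2 : x ≤ c + h) :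
    gfun α c h x = (x - c) ^ (1 - α) := by
  unfold gfun
  rw [max_eq_left (by linarith), max_eq_right (by linarith), max_eq_right (by linarith),
    Real.zero_rpow (by linarith : (1:ℝ) - α ≠ 0)]
  ring

lemma maxpow_step {p h : ℝ} (hp0 : 0 ≤ p) (hp1 : p ≤ 1) (hh : 0 ≤ h) (t : ℝ) :
    max t 0 ^ p ≤ max (t - h) 0 ^ p + h ^ p := by
  rcases le_total t 0 with ht | ht
  · rw [max_eq_right ht]
    have h1 : (0:ℝ) ^ p ≤ h ^ p := Real.rpow_le_rpow le_rfl hh hp0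
    have h2 := Real.rpow_nonneg (le_max_right (t - h) 0) p
    linarith
  · rw [max_eq_left ht]
    have hle : t ≤ max (t - h) 0 + h := by
      rcases le_total (t - h) 0 with h1 | h1
      · rw [max_eq_right h1]; linarith
      · rw [max_eq_left h1]; linarith
    calc t ^ p ≤ (max (t - h) 0 + h) ^ p :=
          Real.rpow_le_rpow ht hle hp0
      _ ≤ max (t - h) 0 ^ p + h ^ p :=
          rpow_subadd (le_max_right _ _) hh hp0 hp1

lemma maxpow_mono {p : ℝ} (hp : 0 ≤ p) {s t : ℝ} (hst : s ≤ t) :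
    max s 0 ^ p ≤ max t 0 ^ p :=
  Real.rpow_le_rpow (le_max_right _ _) (max_le_max hst le_rfl) hp

lemma gfun_abs_le {α c h : ℝ} (hα0 : 0 < α) (hα1 : α < 1) (hh : 0 ≤ h) (x : ℝ) :
    |gfun α c h x| ≤ h ^ (1 - α) := by
  have hp0 : (0:ℝ) ≤ 1 - α := by linarith
  have hp1 : (1:ℝ) - α ≤ 1 := by linarith
  have e1 : x - (c + h) = (x - c) - h := by ring
  have e2 : x - (c + 2 * h) = ((x - c) - h) - h := by ring
  unfold gfun
  rw [e1, e2]
  set A := max (x - c) 0 ^ (1 - α)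
  set B := max ((x - c) - h) 0 ^ (1 - α)
  set C := max (((x - c) - h) - h) 0 ^ (1 - α)
  have h1 : B ≤ A := maxpow_mono hp0 (by linarith)
  have h2 : C ≤ B := maxpow_mono hp0 (by linarith)
  have h3 : A ≤ B + h ^ (1 - α) := maxpow_step hp0 hp1 hh (x - c)
  have h4 : B ≤ C + h ^ (1 - α) := maxpow_step hp0 hp1 hh ((x - c) - h)
  rw [abs_le]
  constructor <;> nlinarith

lemma gfun_tail {α c h δ : ℝ} (hα0 : 0 < α) (hα1 : α < 1) (hh : 0 < h) (hδ : 0 < δ)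
    {x : ℝ} (hx : c + 2 * h + δ ≤ x) :
    |gfun α c h x| ≤ α * (1 - α) * δ ^ (-α - 1) * h ^ 2 := by
  set t := x - c with ht
  have htδ : δ ≤ t - 2 * h := by simp only [ht]; linarith
  have ht2h : 0 < t - 2 * h := by linarith
  have hth : 0 < t - h := by linarith
  have ht0 : 0 < t := by linarith
  -- rewrite gfun with positive arguments
  have hg : gfun α c h x = t ^ (1 - α) - 2 * (t - h) ^ (1 - α) + (t - 2 * h) ^ (1 - α) := by
    unfold gfun
    rw [show x - (c + h) = t - h by simp only [ht]; ring,
      show x - (c + 2 * h) = t - 2 * h by simp only [ht]; ring,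
      max_eq_left ht0.le, max_eq_left hth.le, max_eq_left ht2h.le]
  -- first MVT on q(s) = (s+h)^(1-α) - s^(1-α)
  set q : ℝ → ℝ := fun s => (s + h) ^ (1 - α) - s ^ (1 - α) with hq
  set q' : ℝ → ℝ := fun s => (1 - α) * (s + h) ^ (-α) - (1 - α) * s ^ (-α) with hq'
  have hqd : ∀ s : ℝ, 0 < s → HasDerivAt q (q' s) s := by
    intro s hs
    have d1 : HasDerivAt (fun s : ℝ => (s + h) ^ (1 - α)) ((1 - α) * (s + h) ^ (-α)) s := by
      have hb : HasDerivAt (fun s : ℝ => s + h) 1 s := by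
        simpa using (hasDerivAt_id s).add_const h
      have := (Real.hasDerivAt_rpow_const (x := s + h) (p := 1 - α)
        (Or.inl (by linarith : s + h ≠ 0))).comp s hb
      rw [show (1 - α - 1) = -α by ring, mul_one] at this
      exact this
    have d2 : HasDerivAt (fun s : ℝ => s ^ (1 - α)) ((1 - α) * s ^ (-α)) s := by
      have := Real.hasDerivAt_rpow_const (x := s) (p := 1 - α) (Or.inl (ne_of_gt hs))
      simpa [show (1 - α - 1) = -α by ring] using this
    exact d1.sub d2
  have hcq : Continuous q := by fun_prop (disch := linarith)
  obtain ⟨ξ, hξ, hξeq⟩ := exists_hasDerivAt_eq_slope q q' (by linarith : t - 2 * h < t - h)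
    hcq.continuousOn (fun s hs => hqd s (by cases hs; linarith))
  obtain ⟨hξ1, hξ2⟩ := hξ
  have hξpos : 0 < ξ := by linarith
  -- gfun = h * q' ξ
  have hgq : gfun α c h x = h * q' ξ := by
    have : q' ξ = (q (t - h) - q (t - 2 * h)) / h := by
      rw [hξeq]; congr 1; ring
    rw [this, hg, hq]
    field_simp
    ring
  -- second MVT on r(s) = s^(-α) over [ξ, ξ+h]
  set r : ℝ → ℝ := fun s => s ^ (-α) with hr
  set r' : ℝ → ℝ := fun s => (-α) * s ^ (-α - 1) with hr'
  have hrd : ∀ s : ℝ, 0 < s → HasDerivAt r (r' s) s := fun s hs =>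
    Real.hasDerivAt_rpow_const (x := s) (p := -α) (Or.inl (ne_of_gt hs))
  have hcr : ContinuousOn r (Icc ξ (ξ + h)) := by
    intro s hs
    exact (Real.continuousAt_rpow_const s (-α)
      (Or.inl (by cases hs; intro hc; nlinarith))).continuousWithinAt
  obtain ⟨ζ, hζ, hζeq⟩ := exists_hasDerivAt_eq_slope r r' (by linarith : ξ < ξ + h)
    hcr (fun s hs => hrd s (by cases hs; linarith))
  obtain ⟨hζ1, hζ2⟩ := hζ
  have hζpos : 0 < ζ := by linarith
  -- q' ξ = (1-α) * (r (ξ+h) - r ξ) = (1-α) * h * r' ζ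
  have hq'val : q' ξ = (1 - α) * (h * r' ζ) := by
    have h1 : r (ξ + h) - r ξ = h * r' ζ := by
      have : r' ζ = (r (ξ + h) - r ξ) / h := by rw [hζeq]; congr 1; ring
      rw [this]; field_simp
    simp only [hq', hr] at h1 ⊢
    nlinarith [h1]
  have hfinal : gfun α c h x = -(α * (1 - α) * ζ ^ (-α - 1) * h ^ 2) := by
    rw [hgq, hq'val, hr']
    ring
  have hζnn := (Real.rpow_pos_of_pos hζpos (-α - 1)).le
  rw [hfinal, abs_neg, abs_of_nonneg (by
    apply mul_nonneg (mul_nonneg (mul_nonneg hα0.le (by linarith)) hζnn) (sq_nonneg h))]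
  have hζδ : δ ≤ ζ := by linarith
  have hmono : ζ ^ (-α - 1) ≤ δ ^ (-α - 1) :=
    Real.rpow_le_rpow_of_nonpos hδ hζδ (by linarith)
  apply mul_le_mul_of_nonneg_right _ (sq_nonneg h)
  exact mul_le_mul_of_nonneg_left hmono (by nlinarith)

set_option maxHeartbeats 2000000 in
/-- The fundamental lemma used for the fractional Legendre condition: if the quadratic
functional `∫_a^b [P (D^α η)² + Q η D^α η + R η²] dx` is nonnegative for all admissible
variations `η`, then `P ≥ 0` on `[a,b]`. -/
theorem fractional_legendre_lemma (a b α : ℝ) (hab : a < b) (hα0 : 0 < α) (hα1 : α < 1)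
    (P Q R : ℝ → ℝ)
    (hP : ContinuousOn P (Set.Icc a b)) (hQ : ContinuousOn Q (Set.Icc a b))
    (hR : ContinuousOn R (Set.Icc a b))
    (hpos : ∀ η : ℝ → ℝ, ContinuousOn η (Set.Icc a b) → η a = 0 → η b = 0 →
      (∀ x ∈ Set.Ioc a b, DifferentiableAt ℝ (leftRLint a α η) x) →
      (∃ M : ℝ, ∀ x ∈ Set.Ioc a b, |leftRLderiv a α η x| ≤ M) →
      0 ≤ ∫ x in a..b,
        (P x * leftRLderiv a α η x ^ 2 + Q x * η x * leftRLderiv a α η x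
          + R x * η x ^ 2)) :
    ∀ x ∈ Set.Icc a b, 0 ≤ P x := by
  have h1α : (0:ℝ) < 1 - α := by linarith
  have hΓpos : 0 < Real.Gamma (1 - α) := Real.Gamma_pos_of_pos h1α
  set Γ2 : ℝ := (1 - α) * Real.Gamma (1 - α) with hΓ2def
  have hΓ2 : 0 < Γ2 := mul_pos h1α hΓpos
  -- bounds for P, Q, R
  obtain ⟨CP, hCP⟩ := IsCompact.exists_bound_of_continuousOn isCompact_Icc hP
  obtain ⟨CQ, hCQ⟩ := IsCompact.exists_bound_of_continuousOn isCompact_Icc hQ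
  obtain ⟨CR, hCR⟩ := IsCompact.exists_bound_of_continuousOn isCompact_Icc hR
  have hCP0 : 0 ≤ CP := le_trans (norm_nonneg _) (hCP a ⟨le_refl a, hab.le⟩)
  have hCQ0 : 0 ≤ CQ := le_trans (norm_nonneg _) (hCQ a ⟨le_refl a, hab.le⟩)
  have hCR0 : 0 ≤ CR := le_trans (norm_nonneg _) (hCR a ⟨le_refl a, hab.le⟩)
  have key : ∀ c ∈ Set.Ico a b, 0 ≤ P c := by
    rintro c ⟨hac, hcb⟩
    by_contra hneg
    push_neg at hneg
    set m : ℝ := -P c with hmdef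
    have hm0 : 0 < m := by simp only [hmdef]; linarith
    -- find δ with P < -m/2 near c within [a,b]
    have hPc : ContinuousWithinAt P (Set.Icc a b) c := hP.continuousWithinAt ⟨hac, hcb.le⟩
    have hev : P ⁻¹' (Set.Iio (-(m/2))) ∈ nhdsWithin c (Set.Icc a b) := by
      apply hPc
      apply Iio_mem_nhds
      simp only [hmdef]; linarith
    rw [Metric.mem_nhdsWithin_iff] at hev
    obtain ⟨δ, hδ0, hδsub⟩ := hev
    set δ' : ℝ := min (δ/2) (b - c) with hδ'def
    have hδ'0 : 0 < δ' := lt_min (by linarith) (by linarith)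
    have hδ'δ : δ' ≤ δ/2 := min_le_left _ _
    have hδ'b : c + δ' ≤ b := by
      have := min_le_right (δ/2) (b - c); simp only [hδ'def]; linarith
    have hPneg : ∀ x, c ≤ x → x ≤ c + δ' → P x ≤ -(m/2) := by
      intro x h1 h2
      have hx : x ∈ Metric.ball c δ ∩ Set.Icc a b := by
        constructor
        · rw [Metric.mem_ball, Real.dist_eq, abs_of_nonneg (by linarith)]; linarith
        · exact ⟨by linarith, by linarith⟩
      exact (hδsub hx).le
    -- constants
    set Cd : ℝ := α * (1 - α) * (δ'/2) ^ (-α - 1) with hCddef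
    have hCd0 : 0 ≤ Cd := by
      apply mul_nonneg (mul_nonneg hα0.le h1α.le)
      exact (Real.rpow_pos_of_pos (by linarith) _).le
    set B : ℝ := 2*CQ/Γ2 + 2*CR + CP*Cd^2*(b-a)/Γ2^2 with hBdef
    have hB0 : 0 ≤ B := by
      apply add_nonneg (add_nonneg _ _) _
      · exact div_nonneg (by linarith) hΓ2.le
      · linarith
      · apply div_nonneg _ (by positivity)
        apply mul_nonneg (mul_nonneg hCP0 (by positivity)) (by linarith)
    set E : ℝ := (m/2) * (1/2 : ℝ) ^ ((3:ℝ) - 2*α) / Γ2^2 with hEdef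
    have hE0 : 0 < E := by
      apply div_pos (mul_pos (by linarith) (Real.rpow_pos_of_pos one_half_pos _)) (by positivity)
    -- choose h
    set K : ℝ := E/(2*(B+1)) with hKdef
    have hK0 : 0 < K := by positivity
    set h : ℝ := min 1 (min (δ'/4) (K ^ α⁻¹)) with hhdef
    have hh0 : 0 < h := lt_min one_pos (lt_min (by linarith) (Real.rpow_pos_of_pos hK0 _))
    have hh1 : h ≤ 1 := min_le_left _ _
    have hhδ : 4*h ≤ δ' := by
      have := (min_le_right (1:ℝ) _).trans (min_le_left (δ'/4) (K ^ α⁻¹))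
      linarith
    have hhα : h ^ α ≤ K := by
      have hle : h ≤ K ^ α⁻¹ := (min_le_right (1:ℝ) _).trans (min_le_right _ _)
      calc h ^ α ≤ (K ^ α⁻¹) ^ α := Real.rpow_le_rpow hh0.le hle hα0.le
        _ = K := by
            rw [← Real.rpow_mul hK0.le, inv_mul_cancel₀ (ne_of_gt hα0), Real.rpow_one]
    have hc2hb : c + 2*h ≤ b := by linarith
    clear_value Γ2 Cd B E K h
    -- the variation and its fractional derivative
    set η : ℝ → ℝ := tent c h with hηdef
    set g : ℝ → ℝ := gfun α c h with hgdef
    set D : ℝ → ℝ := fun x => g x / Γ2 with hDdef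
    have hgD : ∀ x, leftRLderiv a α η x = D x := by
      intro x
      rw [hηdef, tent_RLderiv hα0 hα1 hac hh0.le x, ← hΓ2def]
    have hDabs : ∀ x, |D x| ≤ h ^ (1-α) / Γ2 := by
      intro x
      rw [hDdef]
      rw [abs_div, abs_of_pos hΓ2]
      exact div_le_div_of_nonneg_right (gfun_abs_le hα0 hα1 hh0.le x) hΓ2.le
    -- apply hpos
    have hS := hpos η (tent_cont c h).continuousOn (tent_zero_left hh0.le hac)
      (tent_zero_right hh0.le (by linarith))
      (by
        intro x hx
        rw [hηdef, tent_RLint hα0 hα1 hac hh0.le]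
        exact ((Gfun_hasDeriv hα1 x).div_const _).differentiableAt)
      ⟨h ^ (1-α) / Γ2, fun x _ => by rw [hgD x]; exact hDabs x⟩
    simp only [hgD] at hS
    -- notation for the integrand
    set FF : ℝ → ℝ := fun x => P x * D x ^ 2 + Q x * η x * D x + R x * η x ^ 2 with hFFdef
    -- continuity facts
    have hDc : Continuous D := by
      rw [hDdef, hgdef]; exact (gfun_cont hα1 c h).div_const Γ2
    have hηc : Continuous η := tent_cont c h
    have hFFc : ContinuousOn FF (Set.Icc a b) := by
      apply ContinuousOn.add
      apply ContinuousOn.add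
      · exact hP.mul ((hDc.pow 2).continuousOn)
      · exact (hQ.mul hηc.continuousOn).mul hDc.continuousOn
      · exact hR.mul ((hηc.pow 2).continuousOn)
    have hFFi : ∀ p q : ℝ, a ≤ p → q ≤ b → p ≤ q → IntervalIntegrable FF volume p q := by
      intro p q h1 h2 h3
      apply ContinuousOn.intervalIntegrable
      apply hFFc.mono
      rw [uIcc_of_le h3]
      exact Icc_subset_Icc h1 h2
    -- split the integral
    have hsum1 := intervalIntegral.integral_add_adjacent_intervals
      (hFFi a c (le_refl a) (by linarith) hac) (hFFi c (c+δ') hac hδ'b (by linarith))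
    have hsum2 := intervalIntegral.integral_add_adjacent_intervals
      (hFFi a (c+δ') (le_refl a) hδ'b (by linarith)) (hFFi (c+δ') b (by linarith) (le_refl b) hδ'b)
    -- piece 1 is zero
    have hI1 : ∫ x in a..c, FF x = 0 := by
      have hz : EqOn FF 0 (uIcc a c) := by
        intro x hx
        rw [uIcc_of_le hac] at hx
        have hxc : x ≤ c := hx.2
        simp only [hFFdef, hDdef, hgdef, hηdef, Pi.zero_apply,
          tent_zero_left hh0.le hxc, gfun_zero_left hα1 hh0.le hxc]
        norm_num
      rw [intervalIntegral.integral_congr hz]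
      simp
    -- integrability helpers for the three summands
    have hmono : ∀ F : ℝ → ℝ, ContinuousOn F (Set.Icc a b) → ∀ p q : ℝ, a ≤ p → q ≤ b →
        p ≤ q → IntervalIntegrable F volume p q := by
      intro F hF p q h1 h2 h3
      apply ContinuousOn.intervalIntegrable
      apply hF.mono
      rw [uIcc_of_le h3]
      exact Icc_subset_Icc h1 h2
    have hc1 : ContinuousOn (fun x => P x * D x ^ 2) (Set.Icc a b) :=
      hP.mul ((hDc.pow 2).continuousOn)
    have hc2 : ContinuousOn (fun x => Q x * η x * D x) (Set.Icc a b) :=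
      (hQ.mul hηc.continuousOn).mul hDc.continuousOn
    have hc3 : ContinuousOn (fun x => R x * η x ^ 2) (Set.Icc a b) :=
      hR.mul ((hηc.pow 2).continuousOn)
    have hi1 := hmono _ hc1 c (c+δ') hac hδ'b (by linarith)
    have hi2 := hmono _ hc2 c (c+δ') hac hδ'b (by linarith)
    have hi3 := hmono _ hc3 c (c+δ') hac hδ'b (by linarith)
    have hI2split : ∫ x in c..(c+δ'), FF x = (∫ x in c..(c+δ'), P x * D x ^ 2)
        + (∫ x in c..(c+δ'), Q x * η x * D x) + (∫ x in c..(c+δ'), R x * η x ^ 2) := by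
      rw [show (∫ x in c..(c+δ'), FF x) = ∫ x in c..(c+δ'),
        ((fun x => P x * D x ^ 2 + Q x * η x * D x) x + (fun x => R x * η x ^ 2) x) from rfl]
      rw [intervalIntegral.integral_add (hi1.add hi2) hi3,
        intervalIntegral.integral_add hi1 hi2]
    -- (i) the main negative term
    have hstep1 : (∫ x in c..(c+δ'), P x * D x ^ 2)
        ≤ -(m/2) * ∫ x in c..(c+δ'), D x ^ 2 := by
      have hm1 : (∫ x in c..(c+δ'), P x * D x ^ 2)
          ≤ ∫ x in c..(c+δ'), (-(m/2)) * D x ^ 2 := by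
        apply intervalIntegral.integral_mono_on (by linarith) hi1
          ((continuous_const.mul (hDc.pow 2)).intervalIntegrable _ _)
        intro x hx
        exact mul_le_mul_of_nonneg_right (hPneg x hx.1 hx.2) (sq_nonneg _)
      rwa [intervalIntegral.integral_const_mul] at hm1
    have hDsq_int : ∀ p q : ℝ, IntervalIntegrable (fun x => D x ^ 2) volume p q :=
      fun p q => (hDc.pow 2).intervalIntegrable p q
    have hlow : ((h/2) ^ ((1:ℝ)-α)/Γ2) ^ 2 * (h/2) ≤ ∫ x in c..(c+δ'), D x ^ 2 := by
      have hs1 := intervalIntegral.integral_add_adjacent_intervals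
        (hDsq_int c (c+h/2)) (hDsq_int (c+h/2) (c+h))
      have hs2 := intervalIntegral.integral_add_adjacent_intervals
        (hDsq_int c (c+h)) (hDsq_int (c+h) (c+δ'))
      have hn1 : 0 ≤ ∫ x in c..(c+h/2), D x ^ 2 :=
        intervalIntegral.integral_nonneg (by linarith) (fun u _ => sq_nonneg _)
      have hn2 : 0 ≤ ∫ x in (c+h)..(c+δ'), D x ^ 2 :=
        intervalIntegral.integral_nonneg (by linarith) (fun u _ => sq_nonneg _)
      have hmid : ((h/2) ^ ((1:ℝ)-α)/Γ2) ^ 2 * (h/2) ≤ ∫ x in (c+h/2)..(c+h), D x ^ 2 := by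
        have hbnn : 0 ≤ (h/2) ^ ((1:ℝ)-α)/Γ2 :=
          div_nonneg (Real.rpow_nonneg (by linarith) _) hΓ2.le
        have hm2 : ∫ x in (c+h/2)..(c+h), (((h/2) ^ ((1:ℝ)-α)/Γ2) ^ 2)
            ≤ ∫ x in (c+h/2)..(c+h), D x ^ 2 := by
          apply intervalIntegral.integral_mono_on (by linarith)
            intervalIntegrable_const (hDsq_int _ _)
          intro x hx
          have hgx : g x = (x - c) ^ ((1:ℝ)-α) :=
            gfun_mid hα1 hh0.le (by linarith [hx.1]) hx.2
          have hr1 : (h/2) ^ ((1:ℝ)-α) ≤ (x - c) ^ ((1:ℝ)-α) :=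
            Real.rpow_le_rpow (by linarith) (by linarith [hx.1]) h1α.le
          have hr2 : (h/2) ^ ((1:ℝ)-α)/Γ2 ≤ D x := by
            rw [hDdef]
            simp only []
            rw [hgx]
            exact div_le_div_of_nonneg_right hr1 hΓ2.le
          calc ((h/2) ^ ((1:ℝ)-α)/Γ2) ^ 2 ≤ (D x) ^ 2 := by
                apply pow_le_pow_left₀ hbnn hr2
            _ = D x ^ 2 := rfl
        rw [intervalIntegral.integral_const, smul_eq_mul] at hm2
        have harea : (c+h - (c+h/2)) * (((h/2) ^ ((1:ℝ)-α)/Γ2) ^ 2)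
            = ((h/2) ^ ((1:ℝ)-α)/Γ2) ^ 2 * (h/2) := by ring
        linarith only [hm2, harea]
      linarith only [hs1, hs2, hn1, hn2, hmid]
    have hpiece1 : (∫ x in c..(c+δ'), P x * D x ^ 2)
        ≤ -(m/2) * (((h/2) ^ ((1:ℝ)-α)/Γ2) ^ 2 * (h/2)) := by
      have := mul_le_mul_of_nonpos_left hlow (by linarith : -(m/2) ≤ 0)
      linarith only [hstep1, this]
    -- (ii) the Q term
    have hQbnd : (∫ x in c..(c+δ'), Q x * η x * D x) ≤ 2*h*(CQ*(h*(h ^ ((1:ℝ)-α)/Γ2))) := by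
      have hadj := intervalIntegral.integral_add_adjacent_intervals
        (hmono _ hc2 c (c+2*h) hac (by linarith) (by linarith))
        (hmono _ hc2 (c+2*h) (c+δ') (by linarith) hδ'b (by linarith))
      have hzero : (∫ x in (c+2*h)..(c+δ'), Q x * η x * D x) = 0 := by
        have hz : EqOn (fun x => Q x * η x * D x) 0 (uIcc (c+2*h) (c+δ')) := by
          intro x hx
          rw [uIcc_of_le (by linarith)] at hx
          have : η x = 0 := tent_zero_right hh0.le hx.1
          simp [this]
        rw [intervalIntegral.integral_congr hz]
        simp
      have hfirst : (∫ x in c..(c+2*h), Q x * η x * D x)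
          ≤ ∫ x in c..(c+2*h), (CQ*(h*(h ^ ((1:ℝ)-α)/Γ2))) := by
        apply intervalIntegral.integral_mono_on (by linarith)
          (hmono _ hc2 c (c+2*h) hac (by linarith) (by linarith)) intervalIntegrable_const
        intro x hx
        have hxab : x ∈ Set.Icc a b := ⟨by linarith [hx.1], by linarith [hx.2]⟩
        have h1 : |Q x| ≤ CQ := by have := hCQ x hxab; rwa [Real.norm_eq_abs] at this
        have h2 : |η x| ≤ h := by
          rw [abs_of_nonneg (tent_bounds hh0.le x).1]
          exact (tent_bounds hh0.le x).2
        have h3 := hDabs x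
        calc Q x * η x * D x ≤ |Q x * η x * D x| := le_abs_self _
          _ = |Q x| * |η x| * |D x| := by rw [abs_mul, abs_mul]
          _ ≤ CQ * h * (h ^ ((1:ℝ)-α)/Γ2) := by
              apply mul_le_mul (mul_le_mul h1 h2 (abs_nonneg _) hCQ0) h3 (abs_nonneg _)
              exact mul_nonneg hCQ0 hh0.le
          _ = CQ*(h*(h ^ ((1:ℝ)-α)/Γ2)) := by ring
      rw [intervalIntegral.integral_const, smul_eq_mul] at hfirst
      have harea : (c+2*h - c) * (CQ*(h*(h ^ ((1:ℝ)-α)/Γ2)))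
          = 2*h*(CQ*(h*(h ^ ((1:ℝ)-α)/Γ2))) := by ring
      linarith only [hadj, hzero, hfirst, harea]
    -- (iii) the R term
    have hRbnd : (∫ x in c..(c+δ'), R x * η x ^ 2) ≤ 2*h*(CR*h ^ 2) := by
      have hadj := intervalIntegral.integral_add_adjacent_intervals
        (hmono _ hc3 c (c+2*h) hac (by linarith) (by linarith))
        (hmono _ hc3 (c+2*h) (c+δ') (by linarith) hδ'b (by linarith))
      have hzero : (∫ x in (c+2*h)..(c+δ'), R x * η x ^ 2) = 0 := by
        have hz : EqOn (fun x => R x * η x ^ 2) 0 (uIcc (c+2*h) (c+δ')) := by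
          intro x hx
          rw [uIcc_of_le (by linarith)] at hx
          have : η x = 0 := tent_zero_right hh0.le hx.1
          simp [this]
        rw [intervalIntegral.integral_congr hz]
        simp
      have hfirst : (∫ x in c..(c+2*h), R x * η x ^ 2) ≤ ∫ x in c..(c+2*h), (CR*h ^ 2) := by
        apply intervalIntegral.integral_mono_on (by linarith)
          (hmono _ hc3 c (c+2*h) hac (by linarith) (by linarith)) intervalIntegrable_const
        intro x hx
        have hxab : x ∈ Set.Icc a b := ⟨by linarith [hx.1], by linarith [hx.2]⟩
        have h1 : |R x| ≤ CR := by have := hCR x hxab; rwa [Real.norm_eq_abs] at this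
        have h2 : |η x| ≤ h := by
          rw [abs_of_nonneg (tent_bounds hh0.le x).1]
          exact (tent_bounds hh0.le x).2
        calc R x * η x ^ 2 ≤ |R x * η x ^ 2| := le_abs_self _
          _ = |R x| * |η x| ^ 2 := by rw [abs_mul, abs_pow]
          _ ≤ CR * h ^ 2 := by
              apply mul_le_mul h1 (pow_le_pow_left₀ (abs_nonneg _) h2 2)
                (pow_nonneg (abs_nonneg _) 2) hCR0
      rw [intervalIntegral.integral_const, smul_eq_mul] at hfirst
      have harea : (c+2*h - c) * (CR*h ^ 2) = 2*h*(CR*h ^ 2) := by ring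
      linarith only [hadj, hzero, hfirst, harea]
    -- piece 3 (tail)
    have hI3 : (∫ x in (c+δ')..b, FF x) ≤ (b - a) * (CP * (Cd*h ^ 2/Γ2) ^ 2) := by
      have hDtail : ∀ x : ℝ, c+δ' ≤ x → |D x| ≤ Cd*h ^ 2/Γ2 := by
        intro x hx
        have hgt := gfun_tail hα0 hα1 hh0 (show (0:ℝ) < δ'/2 by linarith)
          (show c + 2*h + δ'/2 ≤ x by linarith)
        rw [hDdef]
        simp only []
        rw [abs_div, abs_of_pos hΓ2]
        apply div_le_div_of_nonneg_right _ hΓ2.le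
        calc |g x| ≤ α * (1-α) * (δ'/2) ^ (-α-1) * h ^ 2 := hgt
          _ = Cd * h ^ 2 := by rw [hCddef]
      have hstep : (∫ x in (c+δ')..b, FF x) ≤ ∫ x in (c+δ')..b, (CP * (Cd*h ^ 2/Γ2) ^ 2) := by
        apply intervalIntegral.integral_mono_on hδ'b
          (hFFi (c+δ') b (by linarith) le_rfl hδ'b) intervalIntegrable_const
        intro x hx
        have hη0 : η x = 0 := tent_zero_right hh0.le (by linarith [hx.1])
        have hD2 : D x ^ 2 ≤ (Cd*h ^ 2/Γ2) ^ 2 := by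
          rw [← sq_abs (D x)]
          exact pow_le_pow_left₀ (abs_nonneg _) (hDtail x hx.1) 2
        have hPx : |P x| ≤ CP := by
          have := hCP x ⟨by linarith [hx.1], hx.2⟩
          rwa [Real.norm_eq_abs] at this
        calc FF x = P x * D x ^ 2 := by simp [hFFdef, hη0]
          _ ≤ |P x| * D x ^ 2 := mul_le_mul_of_nonneg_right (le_abs_self _) (sq_nonneg _)
          _ ≤ CP * (Cd*h ^ 2/Γ2) ^ 2 := mul_le_mul hPx hD2 (sq_nonneg _) hCP0
      rw [intervalIntegral.integral_const, smul_eq_mul] at hstep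
      have : (b - (c+δ')) * (CP * (Cd*h ^ 2/Γ2) ^ 2) ≤ (b - a) * (CP * (Cd*h ^ 2/Γ2) ^ 2) := by
        apply mul_le_mul_of_nonneg_right (by linarith)
        positivity
      linarith only [hstep, this]
    -- power identities
    have hβpos : (0:ℝ) < h ^ ((3:ℝ) - 2*α) := Real.rpow_pos_of_pos hh0 _
    have h2pos : (0:ℝ) < h/2 := by linarith
    have hmain : ((h/2) ^ ((1:ℝ)-α)/Γ2) ^ 2 * (h/2)
        = (h ^ ((3:ℝ)-2*α) * (1/2:ℝ) ^ ((3:ℝ)-2*α))/Γ2 ^ 2 := by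
      have e1 : (((h/2):ℝ) ^ ((1:ℝ)-α)) ^ 2 = (h/2) ^ ((2:ℝ)-2*α) := by
        rw [← Real.rpow_natCast ((h/2) ^ ((1:ℝ)-α)) 2, ← Real.rpow_mul h2pos.le]
        congr 1
        push_cast
        ring
      have e2 : ((h/2):ℝ) ^ ((2:ℝ)-2*α) * (h/2) = (h/2) ^ ((3:ℝ)-2*α) := by
        rw [← Real.rpow_add_one (ne_of_gt h2pos) ((2:ℝ)-2*α)]
        congr 1
        ring
      have e3 : ((h/2):ℝ) ^ ((3:ℝ)-2*α) = h ^ ((3:ℝ)-2*α) * (1/2:ℝ) ^ ((3:ℝ)-2*α) := by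
        rw [show (h/2:ℝ) = h * (1/2) by ring, Real.mul_rpow hh0.le (by norm_num)]
      rw [div_pow, div_mul_eq_mul_div, e1, e2, e3]
    have hq1 : h*(h*(h ^ ((1:ℝ)-α))) = h ^ α * h ^ ((3:ℝ)-2*α) := by
      calc h*(h*(h ^ ((1:ℝ)-α))) = h ^ (1:ℝ)*(h ^ (1:ℝ)*h ^ ((1:ℝ)-α)) := by
            rw [Real.rpow_one]
        _ = h ^ ((3:ℝ)-α) := by
            rw [← Real.rpow_add hh0, ← Real.rpow_add hh0]
            congr 1
            ring
        _ = h ^ α * h ^ ((3:ℝ)-2*α) := by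
            rw [← Real.rpow_add hh0]
            congr 1
            ring
    have hq2 : h*h ^ 2 = h ^ (2*α) * h ^ ((3:ℝ)-2*α) := by
      calc h*h ^ 2 = h ^ (1:ℝ)*(h ^ (1:ℝ)*h ^ (1:ℝ)) := by rw [Real.rpow_one]; ring
        _ = h ^ (3:ℝ) := by
            rw [← Real.rpow_add hh0, ← Real.rpow_add hh0]
            congr 1
            ring
        _ = h ^ (2*α) * h ^ ((3:ℝ)-2*α) := by
            rw [← Real.rpow_add hh0]
            congr 1
            ring
    have hq3 : h ^ 2*h ^ 2 = h ^ ((1:ℝ)+2*α) * h ^ ((3:ℝ)-2*α) := by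
      calc h ^ 2*h ^ 2 = h ^ (1:ℝ)*(h ^ (1:ℝ)*(h ^ (1:ℝ)*h ^ (1:ℝ))) := by
            rw [Real.rpow_one]; ring
        _ = h ^ (4:ℝ) := by
            rw [← Real.rpow_add hh0, ← Real.rpow_add hh0, ← Real.rpow_add hh0]
            congr 1
            ring
        _ = h ^ ((1:ℝ)+2*α) * h ^ ((3:ℝ)-2*α) := by
            rw [← Real.rpow_add hh0]
            congr 1
            ring
    have hα2 : h ^ (2*α) ≤ h ^ α :=
      Real.rpow_le_rpow_of_exponent_ge hh0 hh1 (by linarith)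
    have hα3 : h ^ ((1:ℝ)+2*α) ≤ h ^ α :=
      Real.rpow_le_rpow_of_exponent_ge hh0 hh1 (by linarith)
    -- rewrite the three bounds in terms of h^α * h^β
    have t1 : -(m/2) * (((h/2) ^ ((1:ℝ)-α)/Γ2) ^ 2 * (h/2)) = -(E * h ^ ((3:ℝ)-2*α)) := by
      rw [hmain, hEdef]
      ring
    have t2 : 2*h*(CQ*(h*(h ^ ((1:ℝ)-α)/Γ2))) = (2*CQ/Γ2)*(h ^ α*h ^ ((3:ℝ)-2*α)) := by
      calc 2*h*(CQ*(h*(h ^ ((1:ℝ)-α)/Γ2))) = (2*CQ/Γ2)*(h*(h*(h ^ ((1:ℝ)-α)))) := by ring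
        _ = (2*CQ/Γ2)*(h ^ α*h ^ ((3:ℝ)-2*α)) := by rw [hq1]
    have t3 : 2*h*(CR*h ^ 2) = (2*CR)*(h ^ (2*α)*h ^ ((3:ℝ)-2*α)) := by
      calc 2*h*(CR*h ^ 2) = (2*CR)*(h*h ^ 2) := by ring
        _ = (2*CR)*(h ^ (2*α)*h ^ ((3:ℝ)-2*α)) := by rw [hq2]
    have t4 : (b - a) * (CP * (Cd*h ^ 2/Γ2) ^ 2)
        = (CP*Cd ^ 2*(b-a)/Γ2 ^ 2)*(h ^ ((1:ℝ)+2*α)*h ^ ((3:ℝ)-2*α)) := by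
      calc (b - a) * (CP * (Cd*h ^ 2/Γ2) ^ 2)
          = (CP*Cd ^ 2*(b-a)/Γ2 ^ 2)*(h ^ 2*h ^ 2) := by ring
        _ = _ := by rw [hq3]
    -- sum of positive terms ≤ B * h^α * h^β
    have hposbnd : (2*CQ/Γ2)*(h ^ α*h ^ ((3:ℝ)-2*α)) + (2*CR)*(h ^ (2*α)*h ^ ((3:ℝ)-2*α))
        + (CP*Cd ^ 2*(b-a)/Γ2 ^ 2)*(h ^ ((1:ℝ)+2*α)*h ^ ((3:ℝ)-2*α))
        ≤ B * (h ^ α*h ^ ((3:ℝ)-2*α)) := by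
      have c2 : (0:ℝ) ≤ 2*CR := by linarith
      have c3 : (0:ℝ) ≤ CP*Cd ^ 2*(b-a)/Γ2 ^ 2 := by
        apply div_nonneg _ (by positivity)
        apply mul_nonneg (mul_nonneg hCP0 (by positivity)) (by linarith)
      have w2 : (2*CR)*(h ^ (2*α)*h ^ ((3:ℝ)-2*α)) ≤ (2*CR)*(h ^ α*h ^ ((3:ℝ)-2*α)) :=
        mul_le_mul_of_nonneg_left (mul_le_mul_of_nonneg_right hα2 hβpos.le) c2
      have w3 : (CP*Cd ^ 2*(b-a)/Γ2 ^ 2)*(h ^ ((1:ℝ)+2*α)*h ^ ((3:ℝ)-2*α))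
          ≤ (CP*Cd ^ 2*(b-a)/Γ2 ^ 2)*(h ^ α*h ^ ((3:ℝ)-2*α)) :=
        mul_le_mul_of_nonneg_left (mul_le_mul_of_nonneg_right hα3 hβpos.le) c3
      have hBexp : B * (h ^ α*h ^ ((3:ℝ)-2*α)) = (2*CQ/Γ2)*(h ^ α*h ^ ((3:ℝ)-2*α))
          + (2*CR)*(h ^ α*h ^ ((3:ℝ)-2*α))
          + (CP*Cd ^ 2*(b-a)/Γ2 ^ 2)*(h ^ α*h ^ ((3:ℝ)-2*α)) := by
        rw [hBdef]; ring
      linarith only [w2, w3, hBexp]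
    have hBK : B * (h ^ α*h ^ ((3:ℝ)-2*α)) ≤ (E/2) * h ^ ((3:ℝ)-2*α) := by
      have h1 : B*h ^ α ≤ B*K := mul_le_mul_of_nonneg_left hhα hB0
      have h2 : B*K ≤ E/2 := by
        have hKE : K * (2*(B+1)) = E := by
          rw [hKdef]
          exact div_mul_cancel₀ E (ne_of_gt (by linarith : (0:ℝ) < 2*(B+1)))
        linarith only [hKE, hK0]
      calc B * (h ^ α*h ^ ((3:ℝ)-2*α)) = (B*h ^ α)*h ^ ((3:ℝ)-2*α) := by ring
        _ ≤ (E/2)*h ^ ((3:ℝ)-2*α) :=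
            mul_le_mul_of_nonneg_right (h1.trans h2) hβpos.le
    -- put everything together
    have hI2 : (∫ x in c..(c+δ'), FF x)
        ≤ -(E * h ^ ((3:ℝ)-2*α)) + (2*CQ/Γ2)*(h ^ α*h ^ ((3:ℝ)-2*α))
          + (2*CR)*(h ^ (2*α)*h ^ ((3:ℝ)-2*α)) := by
      rw [hI2split]
      have := hpiece1
      rw [t1] at this
      rw [t2] at hQbnd
      rw [t3] at hRbnd
      linarith only [this, hQbnd, hRbnd]
    have hI3' : (∫ x in (c+δ')..b, FF x)
        ≤ (CP*Cd ^ 2*(b-a)/Γ2 ^ 2)*(h ^ ((1:ℝ)+2*α)*h ^ ((3:ℝ)-2*α)) := by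
      rw [← t4]
      exact hI3
    have hneg2 : (∫ x in a..b, FF x) < 0 := by
      have hEh : 0 < (E/2) * h ^ ((3:ℝ)-2*α) := mul_pos (by linarith) hβpos
      calc (∫ x in a..b, FF x)
          = (∫ x in a..c, FF x) + (∫ x in c..(c+δ'), FF x) + (∫ x in (c+δ')..b, FF x) := by
            rw [hsum1, hsum2]
        _ < 0 := by
            rw [hI1]
            linarith only [hI2, hI3', hposbnd, hBK, hEh]
    linarith only [hS, hneg2]
  -- conclude for all of Icc
  intro x hx
  rcases lt_or_eq_of_le hx.2 with hlt | heq
  · exact key x ⟨hx.1, hlt⟩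
  · subst heq
    have hcl : x ∈ closure (Set.Ico a x) := by
      rw [closure_Ico (ne_of_lt hab)]
      exact ⟨hx.1, le_refl x⟩
    have hne : (nhdsWithin x (Set.Ico a x)).NeBot := mem_closure_iff_nhdsWithin_neBot.1 hcl
    have htend : Filter.Tendsto P (nhdsWithin x (Set.Ico a x)) (nhds (P x)) := by
      apply Filter.Tendsto.mono_left (hP.continuousWithinAt hx)
      apply nhdsWithin_mono
      intro y hy
      exact ⟨hy.1, hy.2.le.trans (le_refl x)⟩
    apply ge_of_tendsto htend
    filter_upwards [self_mem_nhdsWithin] with y hy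
    exact key y ⟨hy.1, hy.2⟩
end
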